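/- arXiv:1906.00618 — 9 statements merged into one kernel-verified Lean document; each statement's English description precedes it below -/
import Mathlib

section
/- For any point X̃ in the n×n simplex (nonnegative entries summing to 1) with ‖X̃1 − r‖₁ + ‖X̃ᵀ1 − c‖₁ ≤ δ, where r, c ∈ Δⁿ, the matrix X̂ produced by the rounding procedure satisfies X̂1 = r, X̂ᵀ1 = c, X̂ ≥ 0 entrywise, and ‖X̃ − X̂‖₁ ≤ 2δ. -/
/-- Scaling a nonnegative total `s` by `min (a/s) 1` yields `min a s`. -/
lemma scale_sum_aux {a s : ℝ} (ha : 0 ≤ a) (hs : 0 ≤ s) :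
    min (a / s) 1 * s = min a s := by
  rcases eq_or_lt_of_le hs with h | h
  · simp [← h, min_eq_right ha]
  · rw [min_mul_of_nonneg _ _ h.le, div_mul_cancel₀ _ h.ne', one_mul]

lemma sub_min_abs_aux {a s t : ℝ} (hst : s ≤ t) : s - min a s ≤ |t - a| := by
  rcases le_total a s with h | h
  · rw [min_eq_left h]
    calc s - a ≤ t - a := by linarith
      _ ≤ |t - a| := le_abs_self _
  · rw [min_eq_right h]
    simp [abs_nonneg]

/-- Rounding guarantee (Lemma 7 of Altschuler–Weed–Rigollet): if `X̃` lies in the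
`n × n` simplex and its row/column marginals are within total `ℓ1` distance `δ`
of `r, c ∈ Δⁿ`, then the matrix `X̂` produced by the rounding procedure satisfies
`X̂1 = r`, `X̂ᵀ1 = c`, `X̂ ≥ 0`, and `‖X̃ − X̂‖₁ ≤ 2δ`. -/
theorem stmt_1 (n : ℕ) (δ : ℝ)
    (Xt : Fin n → Fin n → ℝ) (r c : Fin n → ℝ)
    (hXtnn : ∀ i j, 0 ≤ Xt i j) (hXtsum : ∑ i, ∑ j, Xt i j = 1)
    (hrnn : ∀ i, 0 ≤ r i) (hrsum : ∑ i, r i = 1)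
    (hcnn : ∀ j, 0 ≤ c j) (hcsum : ∑ j, c j = 1)
    (hclose : (∑ i, |(∑ j, Xt i j) - r i|) + (∑ j, |(∑ i, Xt i j) - c j|) ≤ δ)
    (X' : Fin n → Fin n → ℝ)
    (hX' : ∀ i j, X' i j = min (r i / ∑ j', Xt i j') 1 * Xt i j)
    (X'' : Fin n → Fin n → ℝ)
    (hX'' : ∀ i j, X'' i j = X' i j * min (c j / ∑ i', X' i' j) 1)
    (er ec : Fin n → ℝ) (E : ℝ)
    (her : ∀ i, er i = r i - ∑ j, X'' i j)
    (hec : ∀ j, ec j = c j - ∑ i, X'' i j)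
    (hE : E = ∑ i, er i)
    (Xh : Fin n → Fin n → ℝ)
    (hXh : ∀ i j, Xh i j = X'' i j + er i * ec j / E) :
    (∀ i, ∑ j, Xh i j = r i) ∧ (∀ j, ∑ i, Xh i j = c j) ∧
    (∀ i j, 0 ≤ Xh i j) ∧ (∑ i, ∑ j, |Xt i j - Xh i j|) ≤ 2 * δ := by
  classical
  have hRnn : ∀ i, (0:ℝ) ≤ ∑ j, Xt i j := fun i => Finset.sum_nonneg fun j _ => hXtnn i j
  -- nonnegativity and entrywise bounds for X'
  have hm1nn : ∀ i, 0 ≤ min (r i / ∑ j', Xt i j') 1 :=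
    fun i => le_min (div_nonneg (hrnn i) (hRnn i)) one_pos.le
  have hX'nn : ∀ i j, 0 ≤ X' i j := fun i j => by
    rw [hX' i j]; exact mul_nonneg (hm1nn i) (hXtnn i j)
  have hX'le : ∀ i j, X' i j ≤ Xt i j := fun i j => by
    rw [hX' i j]; exact mul_le_of_le_one_left (hXtnn i j) (min_le_right _ _)
  have hC'nn : ∀ j, (0:ℝ) ≤ ∑ i, X' i j := fun j => Finset.sum_nonneg fun i _ => hX'nn i j
  -- row sums of X'
  have hrowX' : ∀ i, ∑ j, X' i j = min (r i) (∑ j, Xt i j) := by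
    intro i
    have : ∑ j, X' i j = min (r i / ∑ j', Xt i j') 1 * ∑ j, Xt i j := by
      rw [Finset.mul_sum]; exact Finset.sum_congr rfl fun j _ => hX' i j
    rw [this, scale_sum_aux (hrnn i) (hRnn i)]
  -- nonnegativity and entrywise bounds for X''
  have hm2nn : ∀ j, 0 ≤ min (c j / ∑ i', X' i' j) 1 :=
    fun j => le_min (div_nonneg (hcnn j) (hC'nn j)) one_pos.le
  have hX''nn : ∀ i j, 0 ≤ X'' i j := fun i j => by
    rw [hX'' i j]; exact mul_nonneg (hX'nn i j) (hm2nn j)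
  have hX''le : ∀ i j, X'' i j ≤ X' i j := fun i j => by
    rw [hX'' i j]; exact mul_le_of_le_one_right (hX'nn i j) (min_le_right _ _)
  -- column sums of X''
  have hcolX'' : ∀ j, ∑ i, X'' i j = min (c j) (∑ i, X' i j) := by
    intro j
    have : ∑ i, X'' i j = min (c j / ∑ i', X' i' j) 1 * ∑ i, X' i j := by
      rw [Finset.mul_sum]
      exact Finset.sum_congr rfl fun i _ => by rw [hX'' i j, mul_comm]
    rw [this, scale_sum_aux (hcnn j) (hC'nn j)]
  -- er, ec, E nonnegative
  have hrowX''le : ∀ i, ∑ j, X'' i j ≤ r i := fun i => by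
    calc ∑ j, X'' i j ≤ ∑ j, X' i j := Finset.sum_le_sum fun j _ => hX''le i j
      _ = min (r i) (∑ j, Xt i j) := hrowX' i
      _ ≤ r i := min_le_left _ _
  have hernn : ∀ i, 0 ≤ er i := fun i => by rw [her i]; linarith [hrowX''le i]
  have hecnn : ∀ j, 0 ≤ ec j := fun j => by
    rw [hec j, hcolX'' j]; linarith [min_le_left (c j) (∑ i, X' i j)]
  have hEnn : 0 ≤ E := hE ▸ Finset.sum_nonneg fun i _ => hernn i
  -- key sum identities
  have hS : ∑ j, ∑ i, X'' i j = ∑ i, ∑ j, X'' i j := Finset.sum_comm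
  have hEeq : E = 1 - ∑ i, ∑ j, X'' i j := by
    rw [hE]
    have : ∑ i, er i = ∑ i, (r i - ∑ j, X'' i j) :=
      Finset.sum_congr rfl fun i _ => her i
    rw [this, Finset.sum_sub_distrib, hrsum]
  have hsumec : ∑ j, ec j = E := by
    have : ∑ j, ec j = ∑ j, (c j - ∑ i, X'' i j) :=
      Finset.sum_congr rfl fun j _ => hec j
    rw [this, Finset.sum_sub_distrib, hcsum, hS, hEeq]
  -- bound E ≤ δ
  have hC'leC : ∀ j, ∑ i, X' i j ≤ ∑ i, Xt i j :=
    fun j => Finset.sum_le_sum fun i _ => hX'le i j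
  have hEδ : E ≤ δ := by
    have hP : ∑ j, ∑ i, X' i j = ∑ i, ∑ j, X' i j := Finset.sum_comm
    have hsplit : E = (∑ i, ((∑ j, Xt i j) - min (r i) (∑ j, Xt i j)))
        + (∑ j, ((∑ i, X' i j) - min (c j) (∑ i, X' i j))) := by
      rw [hEeq, Finset.sum_sub_distrib, Finset.sum_sub_distrib, hXtsum]
      have h1 : ∑ i, min (r i) (∑ j, Xt i j) = ∑ i, ∑ j, X' i j :=
        Finset.sum_congr rfl fun i _ => (hrowX' i).symm
      have h2 : ∑ j, min (c j) (∑ i, X' i j) = ∑ i, ∑ j, X'' i j := by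
        rw [← hS]; exact Finset.sum_congr rfl fun j _ => (hcolX'' j).symm
      rw [h1, h2, hP]; ring
    calc E ≤ (∑ i, |(∑ j, Xt i j) - r i|) + (∑ j, |(∑ i, Xt i j) - c j|) := by
          rw [hsplit]
          gcongr with i _ j _
          · exact sub_min_abs_aux le_rfl
          · exact sub_min_abs_aux (hC'leC j)
      _ ≤ δ := hclose
  -- row marginals
  have hrow : ∀ i, ∑ j, Xh i j = r i := by
    intro i
    have hsum : ∑ j, Xh i j = (∑ j, X'' i j) + er i * E / E := by
      have : ∑ j, Xh i j = ∑ j, (X'' i j + er i * ec j / E) :=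
        Finset.sum_congr rfl fun j _ => hXh i j
      rw [this, Finset.sum_add_distrib, ← Finset.sum_div, ← Finset.mul_sum, hsumec]
    rcases eq_or_lt_of_le hEnn with h0 | hpos
    · have her0 : er i = 0 := by
        have := (Finset.sum_eq_zero_iff_of_nonneg (fun i _ => hernn i)).mp
          (by rw [← hE, ← h0])
        exact this i (Finset.mem_univ i)
      rw [hsum, her0]
      have := her i
      rw [her0] at this
      simp [this.symm]
      linarith
    · rw [hsum, mul_div_assoc, div_self hpos.ne', mul_one]
      linarith [her i]
  -- column marginals
  have hcol : ∀ j, ∑ i, Xh i j = c j := by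
    intro j
    have hsum : ∑ i, Xh i j = (∑ i, X'' i j) + E * ec j / E := by
      have : ∑ i, Xh i j = ∑ i, (X'' i j + er i * ec j / E) :=
        Finset.sum_congr rfl fun i _ => hXh i j
      rw [this, Finset.sum_add_distrib, ← Finset.sum_div, ← Finset.sum_mul, ← hE]
    rcases eq_or_lt_of_le hEnn with h0 | hpos
    · have hec0 : ec j = 0 := by
        have := (Finset.sum_eq_zero_iff_of_nonneg (fun j _ => hecnn j)).mp
          (by rw [hsumec, ← h0])
        exact this j (Finset.mem_univ j)
      rw [hsum, hec0]
      have := hec j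
      rw [hec0] at this
      simp [this.symm]
      linarith
    · rw [hsum, mul_comm, mul_div_assoc, div_self hpos.ne', mul_one]
      linarith [hec j]
  -- nonnegativity
  have hnn : ∀ i j, 0 ≤ Xh i j := fun i j => by
    rw [hXh i j]
    exact add_nonneg (hX''nn i j)
      (div_nonneg (mul_nonneg (hernn i) (hecnn j)) hEnn)
  refine ⟨hrow, hcol, hnn, ?_⟩
  -- ℓ1 bound
  have hkey : ∀ i j, |Xt i j - Xh i j| ≤ (Xt i j - X'' i j) + er i * ec j / E := by
    intro i j
    have h1 : 0 ≤ Xt i j - X'' i j := by linarith [hX''le i j, hX'le i j]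
    have h2 : 0 ≤ er i * ec j / E :=
      div_nonneg (mul_nonneg (hernn i) (hecnn j)) hEnn
    calc |Xt i j - Xh i j| = |(Xt i j - X'' i j) - er i * ec j / E| := by
          rw [hXh i j]; ring_nf
      _ ≤ |Xt i j - X'' i j| + |er i * ec j / E| := abs_sub _ _
      _ = (Xt i j - X'' i j) + er i * ec j / E := by
          rw [abs_of_nonneg h1, abs_of_nonneg h2]
  have hEE : E * E / E ≤ E := by
    rcases eq_or_lt_of_le hEnn with h0 | hpos
    · rw [← h0]; simp
    · rw [mul_div_assoc, div_self hpos.ne', mul_one]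
  calc ∑ i, ∑ j, |Xt i j - Xh i j|
      ≤ ∑ i, ∑ j, ((Xt i j - X'' i j) + er i * ec j / E) := by
        gcongr with i _ j _; exact hkey i j
    _ = (1 - ∑ i, ∑ j, X'' i j) + E * E / E := by
        have hprod : ∑ i, ∑ j, er i * ec j / E = E * E / E := by
          have h1 : ∑ i, ∑ j, er i * ec j / E = (∑ i, ∑ j, er i * ec j) / E := by
            rw [Finset.sum_div]
            exact Finset.sum_congr rfl fun i _ => by rw [Finset.sum_div]
          rw [h1, ← Finset.sum_mul_sum, hsumec, ← hE]
        simp only [Finset.sum_add_distrib, Finset.sum_sub_distrib]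
        rw [hXtsum, hprod]
    _ ≤ E + E := by rw [← hEeq]; linarith
    _ ≤ 2 * δ := by linarith
end

section
/- The value of the penalized problem min_{x ∈ Δᵐ} dᵀx + 2‖d‖_∞ ‖Ax − b‖₁ equals OPT = min_{x ∈ Δᵐ, Ax=b} dᵀx, given the existence of a rounding map that takes any x̃ ∈ Δᵐ with ‖Ax̃ − b‖₁ = δ to some x̂ ∈ Δᵐ with Ax̂ = b and ‖x̃ − x̂‖₁ ≤ 2δ. -/
/-- Penalized `ℓ1` regression: the value of
`min_{x ∈ Δᵐ} dᵀx + 2‖d‖_∞ ‖Ax − b‖₁` equals `OPT = min_{x ∈ Δᵐ, Ax = b} dᵀx`,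
where `A` is the edge-incidence matrix of the complete `n × n` bipartite graph and
`b` concatenates marginals `r, c ∈ Δⁿ`, given a rounding map turning any `x̃ ∈ Δᵐ`
with `‖Ax̃ − b‖₁ = δ` into a feasible `x̂` with `‖x̃ − x̂‖₁ ≤ 2δ`. -/
theorem stmt_3 (n : ℕ) (hn : 0 < n)
    (d : Fin n × Fin n → ℝ) (hd : ∀ e, 0 ≤ d e)
    (r c : Fin n → ℝ)
    (hrnn : ∀ i, 0 ≤ r i) (hrsum : ∑ i, r i = 1)
    (hcnn : ∀ j, 0 ≤ c j) (hcsum : ∑ j, c j = 1)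
    (A : (Fin n ⊕ Fin n) → (Fin n × Fin n) → ℝ)
    (hA : ∀ v e, A v e = if v = Sum.inl e.1 ∨ v = Sum.inr e.2 then 1 else 0)
    (b : (Fin n ⊕ Fin n) → ℝ) (hb : ∀ v, b v = Sum.elim r c v)
    (M : ℝ) (hM : IsGreatest (Set.range fun e => |d e|) M)
    (S : Set (Fin n × Fin n → ℝ))
    (hS : S = {x | (∀ e, 0 ≤ x e) ∧ ∑ e, x e = 1})
    (hfeas : ∃ x ∈ S, ∀ v, ∑ e, A v e * x e = b v)
    (hround : ∀ x ∈ S, ∃ x' ∈ S, (∀ v, ∑ e, A v e * x' e = b v) ∧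
      (∑ e, |x e - x' e|) ≤ 2 * ∑ v, |(∑ e, A v e * x e) - b v|) :
    sInf {val | ∃ x ∈ S,
        val = (∑ e, d e * x e) + 2 * M * ∑ v, |(∑ e, A v e * x e) - b v|}
      = sInf {val | ∃ x ∈ S, (∀ v, ∑ e, A v e * x e = b v) ∧ val = ∑ e, d e * x e} := by
  have hM0 : 0 ≤ M := by
    obtain ⟨e, he⟩ := hM.1
    rw [← he]; positivity
  have hxnn : ∀ x ∈ S, ∀ e, 0 ≤ x e := by
    intro x hx e; rw [hS] at hx; exact hx.1 e
  -- bounds below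
  have hbP : BddBelow {val | ∃ x ∈ S,
      val = (∑ e, d e * x e) + 2 * M * ∑ v, |(∑ e, A v e * x e) - b v|} := by
    refine ⟨0, ?_⟩
    rintro v ⟨x, hx, rfl⟩
    have h1 : 0 ≤ ∑ e, d e * x e :=
      Finset.sum_nonneg fun e _ => mul_nonneg (hd e) (hxnn x hx e)
    have h2 : 0 ≤ ∑ v, |(∑ e, A v e * x e) - b v| :=
      Finset.sum_nonneg fun v _ => abs_nonneg _
    positivity
  have hbF : BddBelow {val | ∃ x ∈ S, (∀ v, ∑ e, A v e * x e = b v) ∧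
      val = ∑ e, d e * x e} := by
    refine ⟨0, ?_⟩
    rintro v ⟨x, hx, _, rfl⟩
    exact Finset.sum_nonneg fun e _ => mul_nonneg (hd e) (hxnn x hx e)
  obtain ⟨x₀, hx₀S, hx₀f⟩ := hfeas
  have hFne : {val | ∃ x ∈ S, (∀ v, ∑ e, A v e * x e = b v) ∧
      val = ∑ e, d e * x e}.Nonempty := ⟨_, x₀, hx₀S, hx₀f, rfl⟩
  apply le_antisymm
  · -- sInf P ≤ sInf F : F ⊆ P
    apply csInf_le_csInf hbP hFne
    rintro v ⟨x, hx, hfx, rfl⟩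
    refine ⟨x, hx, ?_⟩
    have : ∑ v, |(∑ e, A v e * x e) - b v| = 0 := by
      apply Finset.sum_eq_zero; intro v _; rw [hfx v]; simp
    rw [this]; ring
  · -- sInf F ≤ sInf P
    apply le_csInf
    · exact ⟨_, x₀, hx₀S, rfl⟩
    rintro v ⟨x, hx, rfl⟩
    obtain ⟨x', hx'S, hx'f, hx'cl⟩ := hround x hx
    have h1 : sInf {val | ∃ x ∈ S, (∀ v, ∑ e, A v e * x e = b v) ∧
        val = ∑ e, d e * x e} ≤ ∑ e, d e * x' e :=
      csInf_le hbF ⟨x', hx'S, hx'f, rfl⟩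
    refine h1.trans ?_
    have key : ∑ e, d e * x' e ≤ (∑ e, d e * x e) + M * ∑ e, |x e - x' e| := by
      rw [Finset.mul_sum, ← Finset.sum_add_distrib]
      apply Finset.sum_le_sum
      intro e _
      have h2 : d e * x' e - d e * x e ≤ M * |x e - x' e| := by
        have : d e * x' e - d e * x e ≤ |d e| * |x e - x' e| := by
          calc d e * x' e - d e * x e = d e * (x' e - x e) := by ring
            _ ≤ |d e * (x' e - x e)| := le_abs_self _
            _ = |d e| * |x' e - x e| := abs_mul _ _
            _ = |d e| * |x e - x' e| := by rw [abs_sub_comm]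
        exact this.trans (mul_le_mul_of_nonneg_right (hM.2 ⟨e, rfl⟩) (abs_nonneg _))
      linarith
    refine key.trans ?_
    have h3 : M * ∑ e, |x e - x' e| ≤
        M * (2 * ∑ v, |(∑ e, A v e * x e) - b v|) :=
      mul_le_mul_of_nonneg_left hx'cl hM0
    linarith
end

section
/- Suppose x ∈ Δᵐ and y ∈ [−1,1]^{2n} satisfy, for all u ∈ Δᵐ and v ∈ [−1,1]^{2n}, (dᵀx + 2‖d‖_∞(vᵀAx − bᵀv)) − (dᵀu + 2‖d‖_∞(yᵀAu − bᵀy)) ≤ δ. Then dᵀx + 2‖d‖_∞‖Ax − b‖₁ ≤ δ + OPT, where OPT = min_{u ∈ Δᵐ} dᵀu + 2‖d‖_∞‖Au − b‖₁. -/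
/-- Duality gap to error: if `x ∈ Δᵐ`, `y ∈ [−1,1]^{2n}` have duality gap at most `δ`
against all feasible `u, v` for the objective
`dᵀx + 2‖d‖_∞ (yᵀAx − bᵀy)`, then `dᵀx + 2‖d‖_∞ ‖Ax − b‖₁ ≤ δ + OPT`, where
`OPT = min_{u ∈ Δᵐ} dᵀu + 2‖d‖_∞ ‖Au − b‖₁`. -/
theorem stmt_4 (m n : ℕ) (d : Fin m → ℝ)
    (A : Fin (2 * n) → Fin m → ℝ) (b : Fin (2 * n) → ℝ)
    (M : ℝ) (hM : IsGreatest (Set.range fun j => |d j|) M)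
    (x : Fin m → ℝ) (hxnn : ∀ j, 0 ≤ x j) (hxsum : ∑ j, x j = 1)
    (y : Fin (2 * n) → ℝ) (hy : ∀ i, |y i| ≤ 1) (δ : ℝ)
    (hgap : ∀ u : Fin m → ℝ, (∀ j, 0 ≤ u j) → (∑ j, u j) = 1 →
      ∀ v : Fin (2 * n) → ℝ, (∀ i, |v i| ≤ 1) →
      ((∑ j, d j * x j) + 2 * M * ((∑ i, v i * ∑ j, A i j * x j) - ∑ i, b i * v i))
        - ((∑ j, d j * u j) + 2 * M * ((∑ i, y i * ∑ j, A i j * u j) - ∑ i, b i * y i))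
        ≤ δ) :
    (∑ j, d j * x j) + 2 * M * (∑ i, |(∑ j, A i j * x j) - b i|)
      ≤ δ + sInf {val | ∃ u : Fin m → ℝ, (∀ j, 0 ≤ u j) ∧ (∑ j, u j) = 1 ∧
          val = (∑ j, d j * u j) + 2 * M * (∑ i, |(∑ j, A i j * u j) - b i|)} := by
  obtain ⟨j0, hj0⟩ := hM.1
  have hM0 : 0 ≤ M := hj0 ▸ abs_nonneg _
  rw [← sub_le_iff_le_add']
  apply le_csInf
  · exact ⟨_, ⟨x, hxnn, hxsum, rfl⟩⟩
  rintro val ⟨u, hu, husum, rfl⟩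
  rw [sub_le_iff_le_add']
  set v : Fin (2 * n) → ℝ := fun i => if 0 ≤ (∑ j, A i j * x j) - b i then 1 else -1 with hv
  have hvb : ∀ i, |v i| ≤ 1 := by
    intro i; simp only [hv]; split_ifs <;> simp
  have key := hgap u hu husum v hvb
  have h1 : (∑ i, v i * ∑ j, A i j * x j) - ∑ i, b i * v i
      = ∑ i, |(∑ j, A i j * x j) - b i| := by
    rw [← Finset.sum_sub_distrib]
    refine Finset.sum_congr rfl fun i _ => ?_
    simp only [hv]
    split_ifs with h
    · rw [one_mul, mul_one, abs_of_nonneg h]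
    · rw [abs_of_neg (lt_of_not_ge h)]; ring
  have h2 : (∑ i, y i * ∑ j, A i j * u j) - ∑ i, b i * y i
      ≤ ∑ i, |(∑ j, A i j * u j) - b i| := by
    rw [← Finset.sum_sub_distrib]
    refine Finset.sum_le_sum fun i _ => ?_
    have e : y i * (∑ j, A i j * u j) - b i * y i = y i * ((∑ j, A i j * u j) - b i) := by
      ring
    rw [e]
    calc y i * ((∑ j, A i j * u j) - b i) ≤ |y i * ((∑ j, A i j * u j) - b i)| :=
          le_abs_self _
      _ = |y i| * |(∑ j, A i j * u j) - b i| := abs_mul _ _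
      _ ≤ 1 * |(∑ j, A i j * u j) - b i| :=
          mul_le_mul_of_nonneg_right (hy i) (abs_nonneg _)
      _ = _ := one_mul _
  rw [h1] at key
  have h3 := mul_le_mul_of_nonneg_left h2 (by linarith : (0:ℝ) ≤ 2 * M)
  linarith
end

section
/- Suppose r is κ-area-convex with respect to operator g and Θ ≥ r(u) − r(z̄) where z̄ minimizes r. Then the dual extrapolation iterates z_t = prox_{z̄}(s_t), w_t = prox_{z̄}(s_t + g(z_t)/κ), s_{t+1} = s_t + g(w_t)/(2κ), starting from s_0 = 0, satisfy (1/T) Σ_{t=0}^{T−1} ⟨g(w_t), w_t − u⟩ ≤ 2κΘ/T, and hence for linear g, ⟨g(w̄), w̄ − u⟩ ≤ 2κΘ/T for w̄ = (1/T)Σ w_t. -/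
namespace Stmt10Aux

variable {N : ℕ}

def ip (a b : Fin N → ℝ) : ℝ := ∑ i, a i * b i

lemma ip_add_left (a b c : Fin N → ℝ) : ip (a + b) c = ip a c + ip b c := by
  simp [ip, add_mul, Finset.sum_add_distrib]

lemma ip_add_right (a b c : Fin N → ℝ) : ip a (b + c) = ip a b + ip a c := by
  simp [ip, mul_add, Finset.sum_add_distrib]

lemma ip_smul_left (r : ℝ) (a b : Fin N → ℝ) : ip (r • a) b = r * ip a b := by
  simp [ip, Finset.mul_sum, mul_assoc]

lemma ip_zero_left (b : Fin N → ℝ) : ip (0 : Fin N → ℝ) b = 0 := by simp [ip]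

lemma ip_sub_right (a b c : Fin N → ℝ) : ip a (b - c) = ip a b - ip a c := by
  simp [ip, mul_sub, Finset.sum_sub_distrib]

lemma ip_sub_left (a b c : Fin N → ℝ) : ip (a - b) c = ip a c - ip b c := by
  simp [ip, sub_mul, Finset.sum_sub_distrib]

lemma ip_smul_right (r : ℝ) (a b : Fin N → ℝ) : ip a (r • b) = r * ip a b := by
  simp only [ip, Pi.smul_apply, smul_eq_mul, Finset.mul_sum]
  exact Finset.sum_congr rfl fun i _ => by ring

lemma ip_sum_left {α} (F : Finset α) (f : α → Fin N → ℝ) (b : Fin N → ℝ) :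
    ip (∑ t ∈ F, f t) b = ∑ t ∈ F, ip (f t) b := by
  simp only [ip, Finset.sum_apply, Finset.sum_mul]
  exact Finset.sum_comm

lemma ip_sum_right {α} (F : Finset α) (a : Fin N → ℝ) (f : α → Fin N → ℝ) :
    ip a (∑ t ∈ F, f t) = ∑ t ∈ F, ip a (f t) := by
  simp only [ip, Finset.sum_apply, Finset.mul_sum]
  exact Finset.sum_comm

lemma mid_mem {D : Set (Fin N → ℝ)} (hD : Convex ℝ D) {a b c : Fin N → ℝ}
    (ha : a ∈ D) (hb : b ∈ D) (hc : c ∈ D) : (3 : ℝ)⁻¹ • (a + b + c) ∈ D := by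
  have h2 : ((1:ℝ)/2) • b + ((1:ℝ)/2) • c ∈ D := hD hb hc (by norm_num) (by norm_num) (by norm_num)
  have h3 : ((1:ℝ)/3) • a + ((2:ℝ)/3) • (((1:ℝ)/2) • b + ((1:ℝ)/2) • c) ∈ D :=
    hD ha h2 (by norm_num) (by norm_num) (by norm_num)
  convert h3 using 1
  funext i
  simp [Pi.smul_apply, Pi.add_apply, smul_eq_mul]
  ring

end Stmt10Aux

open Stmt10Aux

/-- Dual extrapolation convergence: if `r` is `κ`-area-convex with respect to `g`
(the affine gradient operator of a convex-concave bilinear objective, `g z = Jz + j₀`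
with `J` antisymmetric), `z̄` minimizes `r` over the convex domain `D` (with
first-order optimality, `gr` a subgradient of `r` at `z̄`), and
`Θ ≥ r(u) − r(z̄)`, then the iterates `z_t = prox_{z̄}(s_t)`,
`w_t = prox_{z̄}(s_t + g(z_t)/κ)`, `s_{t+1} = s_t + g(w_t)/(2κ)`, `s_0 = 0`, satisfy
`(1/T) Σ_{t<T} ⟨g(w_t), w_t − u⟩ ≤ 2κΘ/T`, and hence
`⟨g(w̄), w̄ − u⟩ ≤ 2κΘ/T` for `w̄ = (1/T) Σ_{t<T} w_t`. -/
theorem stmt_10 (N T : ℕ) (hT : 0 < T)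
    (D : Set (Fin N → ℝ)) (hD : Convex ℝ D)
    (r : (Fin N → ℝ) → ℝ) (g : (Fin N → ℝ) → (Fin N → ℝ))
    (κ : ℝ) (hκ : 0 < κ)
    (harea : ∀ a ∈ D, ∀ b ∈ D, ∀ c ∈ D,
      κ * (r a + r b + r c - 3 * r ((3 : ℝ)⁻¹ • (a + b + c)))
        ≥ ∑ i, (g b - g a) i * (b - c) i)
    (J : (Fin N → ℝ) →ₗ[ℝ] (Fin N → ℝ)) (j₀ : Fin N → ℝ)
    (hg : ∀ x, g x = J x + j₀)
    (hJanti : ∀ x, ∑ i, J x i * x i = 0)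
    (zbar : Fin N → ℝ) (hzbarD : zbar ∈ D)
    (hzbarmin : ∀ u ∈ D, r zbar ≤ r u)
    (gr : Fin N → ℝ)
    (hsub : ∀ u ∈ D, r zbar + ∑ i, gr i * (u - zbar) i ≤ r u)
    (hfo : ∀ u ∈ D, 0 ≤ ∑ i, gr i * (u - zbar) i)
    (V : (Fin N → ℝ) → ℝ)
    (hV : ∀ w', V w' = r w' - r zbar - ∑ i, gr i * (w' - zbar) i)
    (u : Fin N → ℝ) (hu : u ∈ D) (Θ : ℝ) (hΘ : r u - r zbar ≤ Θ)
    (s z w : ℕ → Fin N → ℝ)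
    (hs0 : s 0 = 0)
    (hsrec : ∀ t, s (t + 1) = s t + (1 / (2 * κ)) • g (w t))
    (hz : ∀ t, z t ∈ D ∧ ∀ u' ∈ D,
      (∑ i, s t i * z t i) + V (z t) ≤ (∑ i, s t i * u' i) + V u')
    (hw : ∀ t, w t ∈ D ∧ ∀ u' ∈ D,
      (∑ i, (s t + (1 / κ) • g (z t)) i * w t i) + V (w t)
        ≤ (∑ i, (s t + (1 / κ) • g (z t)) i * u' i) + V u')
    (wbar : Fin N → ℝ) (hwbar : wbar = (T : ℝ)⁻¹ • ∑ t ∈ Finset.range T, w t) :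
    ((T : ℝ)⁻¹ * (∑ t ∈ Finset.range T, ∑ i, g (w t) i * (w t - u) i) ≤ 2 * κ * Θ / T) ∧
    (∑ i, g wbar i * (wbar - u) i ≤ 2 * κ * Θ / T) := by
  have hκ' : κ ≠ 0 := ne_of_gt hκ
  have hTn : (T : ℝ) ≠ 0 := Nat.cast_ne_zero.mpr hT.ne'
  have hVnonneg : ∀ x ∈ D, 0 ≤ V x := by
    intro x hx
    rw [hV]
    have := hsub x hx
    linarith
  have hVuΘ : V u ≤ Θ := by
    rw [hV]
    have := hfo u hu
    linarith
  -- area convexity transfers from r to V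
  have hareaV : ∀ a ∈ D, ∀ b ∈ D, ∀ c ∈ D,
      κ * (V a + V b + V c - 3 * V ((3 : ℝ)⁻¹ • (a + b + c)))
        ≥ ip (g b - g a) (b - c) := by
    intro a ha b hb c hc
    have hsum : (∑ i, gr i * (a - zbar) i) + (∑ i, gr i * (b - zbar) i)
        + (∑ i, gr i * (c - zbar) i)
        = 3 * ∑ i, gr i * (((3 : ℝ)⁻¹ • (a + b + c)) - zbar) i := by
      rw [Finset.mul_sum, ← Finset.sum_add_distrib, ← Finset.sum_add_distrib]
      refine Finset.sum_congr rfl fun i _ => ?_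
      simp only [Pi.sub_apply, Pi.add_apply, Pi.smul_apply, smul_eq_mul]
      ring
    have h := harea a ha b hb c hc
    have hEq : V a + V b + V c - 3 * V ((3 : ℝ)⁻¹ • (a + b + c))
        = r a + r b + r c - 3 * r ((3 : ℝ)⁻¹ • (a + b + c)) := by
      rw [hV, hV, hV, hV]
      linarith [hsum]
    rw [hEq]
    exact h
  -- one-step inequality (scaled by 2κ)
  have onestep : ∀ t, 2 * κ * (ip (s t) (z t) + V (z t)) + ip (g (w t)) (w t)
      ≤ 2 * κ * (ip (s (t + 1)) (z (t + 1)) + V (z (t + 1))) := by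
    intro t
    obtain ⟨hztD, hzopt⟩ := hz t
    obtain ⟨hwtD, hwopt⟩ := hw t
    obtain ⟨hxD, _⟩ := hz (t + 1)
    have hm : (3 : ℝ)⁻¹ • (z t + w t + z (t + 1)) ∈ D := mid_mem hD hztD hwtD hxD
    have hA0 : ip (s t) (z t) + V (z t)
        ≤ ip (s t) ((3 : ℝ)⁻¹ • (z t + w t + z (t + 1)))
          + V ((3 : ℝ)⁻¹ • (z t + w t + z (t + 1))) := hzopt _ hm
    rw [ip_smul_right, ip_add_right, ip_add_right] at hA0
    have hB0 : ip (s t + (1 / κ) • g (z t)) (w t) + V (w t)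
        ≤ ip (s t + (1 / κ) • g (z t)) (z (t + 1)) + V (z (t + 1)) :=
      hwopt _ hxD
    rw [ip_add_left, ip_add_left, ip_smul_left, ip_smul_left] at hB0
    have hC := hareaV (z t) hztD (w t) hwtD (z (t + 1)) hxD
    rw [ip_sub_left, ip_sub_right, ip_sub_right] at hC
    -- abbreviations
    set a1 := ip (s t) (z t) with ha1
    set a2 := ip (s t) (w t) with ha2
    set a3 := ip (s t) (z (t + 1)) with ha3
    set Gww := ip (g (w t)) (w t) with hGww
    set Gwx := ip (g (w t)) (z (t + 1)) with hGwx
    set Gzw := ip (g (z t)) (w t) with hGzw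
    set Gzx := ip (g (z t)) (z (t + 1)) with hGzx
    set Vz := V (z t) with hVz
    set Vw := V (w t) with hVw
    set Vx := V (z (t + 1)) with hVx
    set Vm := V ((3 : ℝ)⁻¹ • (z t + w t + z (t + 1))) with hVm
    -- multiply hA0 by 2κ and hB0 by κ
    have hA2 : 2 * κ * (a1 + Vz)
        ≤ 2 * κ * ((3 : ℝ)⁻¹ * (a1 + a2 + a3) + Vm) := by
      exact mul_le_mul_of_nonneg_left hA0 (by positivity : (0:ℝ) ≤ 2 * κ)
    have hB2 : κ * a2 + Gzw + κ * Vw ≤ κ * a3 + Gzx + κ * Vx := by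
      have h := mul_le_mul_of_nonneg_left hB0 hκ.le
      have e1 : κ * (a2 + 1 / κ * Gzw + Vw) = κ * a2 + Gzw + κ * Vw := by
        field_simp
      have e2 : κ * (a3 + 1 / κ * Gzx + Vx) = κ * a3 + Gzx + κ * Vx := by
        field_simp
      rw [e1, e2] at h
      exact h
    -- expand goal
    rw [hsrec t, ip_add_left, ip_smul_left]
    have eg : 2 * κ * (a3 + 1 / (2 * κ) * Gwx + Vx) = 2 * κ * a3 + Gwx + 2 * κ * Vx := by
      field_simp
    rw [eg]
    nlinarith [hA2, hB2, hC]
  -- telescoping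
  have accum : ∀ t, 2 * κ * (ip (s 0) (z 0) + V (z 0))
      + ∑ k ∈ Finset.range t, ip (g (w k)) (w k)
      ≤ 2 * κ * (ip (s t) (z t) + V (z t)) := by
    intro t
    induction t with
    | zero => simp
    | succ n ih =>
      rw [Finset.sum_range_succ]
      linarith [onestep n]
  have hM0 : 0 ≤ 2 * κ * (ip (s 0) (z 0) + V (z 0)) := by
    have h0 : ip (s 0) (z 0) = 0 := by rw [hs0]; exact ip_zero_left _
    have h1 := hVnonneg (z 0) (hz 0).1
    rw [h0]
    have : (0:ℝ) ≤ 2 * κ := by positivity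
    nlinarith
  have hsT : ∀ n, s n = (1 / (2 * κ)) • ∑ t ∈ Finset.range n, g (w t) := by
    intro n
    induction n with
    | zero => simp [hs0]
    | succ m ih => rw [hsrec m, ih, Finset.sum_range_succ, smul_add]
  have hipsT : 2 * κ * ip (s T) u = ∑ t ∈ Finset.range T, ip (g (w t)) u := by
    rw [hsT T, ip_smul_left, ip_sum_left]
    field_simp
  have hMT : ip (s T) (z T) + V (z T) ≤ ip (s T) u + V u := (hz T).2 u hu
  have hMT2 : 2 * κ * (ip (s T) (z T) + V (z T)) ≤ 2 * κ * (ip (s T) u + V u) :=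
    mul_le_mul_of_nonneg_left hMT (by positivity)
  have hVθ2 : 2 * κ * V u ≤ 2 * κ * Θ := mul_le_mul_of_nonneg_left hVuΘ (by positivity)
  have hS : ∑ t ∈ Finset.range T, ip (g (w t)) (w t - u) ≤ 2 * κ * Θ := by
    have hsplit : ∑ t ∈ Finset.range T, ip (g (w t)) (w t - u)
        = (∑ t ∈ Finset.range T, ip (g (w t)) (w t))
          - ∑ t ∈ Finset.range T, ip (g (w t)) u := by
      rw [← Finset.sum_sub_distrib]
      exact Finset.sum_congr rfl fun t _ => ip_sub_right _ _ _
    rw [hsplit]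
    have h1 := accum T
    nlinarith [hipsT, hM0, hMT2, hVθ2]
  have goal1 : (T : ℝ)⁻¹ * (∑ t ∈ Finset.range T, ip (g (w t)) (w t - u)) ≤ 2 * κ * Θ / T := by
    have h4 := mul_le_mul_of_nonneg_left hS (by positivity : (0:ℝ) ≤ (T:ℝ)⁻¹)
    have : 2 * κ * Θ / T = (T : ℝ)⁻¹ * (2 * κ * Θ) := by ring
    rw [this]
    exact h4
  constructor
  · exact goal1
  · have hlin : ∀ x : Fin N → ℝ, ip (g x) (x - u) = ip j₀ x - ip (J x) u - ip j₀ u := by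
      intro x
      rw [hg, ip_add_left, ip_sub_right, ip_sub_right]
      have hx0 : ip (J x) x = 0 := hJanti x
      rw [hx0]
      ring
    have hwbar_eq : ip (g wbar) (wbar - u)
        = (T : ℝ)⁻¹ * ∑ t ∈ Finset.range T, ip (g (w t)) (w t - u) := by
      rw [hlin wbar]
      have e1 : ip j₀ wbar = (T : ℝ)⁻¹ * ∑ t ∈ Finset.range T, ip j₀ (w t) := by
        rw [hwbar, ip_smul_right, ip_sum_right]
      have e2 : ip (J wbar) u = (T : ℝ)⁻¹ * ∑ t ∈ Finset.range T, ip (J (w t)) u := by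
        rw [hwbar, map_smul, map_sum, ip_smul_left, ip_sum_left]
      have e3 : ∑ t ∈ Finset.range T, ip (g (w t)) (w t - u)
          = ∑ t ∈ Finset.range T, (ip j₀ (w t) - ip (J (w t)) u - ip j₀ u) :=
        Finset.sum_congr rfl fun t _ => hlin (w t)
      rw [e1, e2, e3, Finset.sum_sub_distrib, Finset.sum_sub_distrib,
        Finset.sum_const, Finset.card_range, nsmul_eq_mul]
      field_simp
    show ip (g wbar) (wbar - u) ≤ 2 * κ * Θ / T
    rw [hwbar_eq]
    exact goal1
end

section
/- Under the hypotheses of the dual extrapolation convergence lemma (κ-area-convex r, range bound Θ), the key per-step inequality holds: (1/(2κ))⟨g(w_t), w_t − z̄⟩ ≤ ⟨s_{t+1}, z_{t+1} − z̄⟩ + V_{z̄}(z_{t+1}) − ⟨s_t, z_t − z̄⟩ − V_{z̄}(z_t). -/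
lemma de_sum_mul_sub {N : ℕ} (x y z : Fin N → ℝ) :
    ∑ i, x i * (y - z) i = (∑ i, x i * y i) - ∑ i, x i * z i := by
  simp [Pi.sub_apply, mul_sub, Finset.sum_sub_distrib]

lemma de_sum_add_smul {N : ℕ} (x v y : Fin N → ℝ) (a : ℝ) :
    ∑ i, (x + a • v) i * y i = (∑ i, x i * y i) + a * ∑ i, v i * y i := by
  simp [Pi.add_apply, Pi.smul_apply, smul_eq_mul, add_mul, Finset.sum_add_distrib,
    Finset.mul_sum, mul_assoc]

lemma de_sum_centroid {N : ℕ} (x a b c : Fin N → ℝ) :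
    ∑ i, x i * ((3:ℝ)⁻¹ • (a + b + c)) i
      = (3:ℝ)⁻¹ * ((∑ i, x i * a i) + (∑ i, x i * b i) + ∑ i, x i * c i) := by
  simp only [Pi.smul_apply, Pi.add_apply, smul_eq_mul, mul_add, Finset.sum_add_distrib,
    Finset.mul_sum, mul_left_comm]

lemma de_sum_sub_mul_sub {N : ℕ} (x y u v : Fin N → ℝ) :
    ∑ i, (x - y) i * (u - v) i
      = (∑ i, x i * u i) - (∑ i, x i * v i) - (∑ i, y i * u i) + ∑ i, y i * v i := by
  simp [Pi.sub_apply, sub_mul, mul_sub, Finset.sum_sub_distrib]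
  ring

/-- Key per-step inequality of dual extrapolation: with `r` `κ`-area-convex with
respect to `g`, `z_t = prox_{z̄}(s_t)`, `w_t = prox_{z̄}(s_t + g(z_t)/κ)` and
`s_{t+1} = s_t + g(w_t)/(2κ)`,
`(1/(2κ)) ⟨g(w_t), w_t − z̄⟩ ≤ ⟨s_{t+1}, z_{t+1} − z̄⟩ + V_{z̄}(z_{t+1})
  − ⟨s_t, z_t − z̄⟩ − V_{z̄}(z_t)`. -/
theorem stmt_11 (N : ℕ)
    (D : Set (Fin N → ℝ)) (hD : Convex ℝ D)
    (r : (Fin N → ℝ) → ℝ) (g : (Fin N → ℝ) → (Fin N → ℝ))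
    (κ : ℝ) (hκ : 0 < κ)
    (harea : ∀ a ∈ D, ∀ b ∈ D, ∀ c ∈ D,
      κ * (r a + r b + r c - 3 * r ((3 : ℝ)⁻¹ • (a + b + c)))
        ≥ ∑ i, (g b - g a) i * (b - c) i)
    (zbar : Fin N → ℝ) (hzbarD : zbar ∈ D)
    (gr : Fin N → ℝ)
    (V : (Fin N → ℝ) → ℝ)
    (hV : ∀ w', V w' = r w' - r zbar - ∑ i, gr i * (w' - zbar) i)
    (st st1 zt wt zt1 : Fin N → ℝ)
    (hztD : zt ∈ D) (hwtD : wt ∈ D) (hzt1D : zt1 ∈ D)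
    (hst1 : st1 = st + (1 / (2 * κ)) • g wt)
    (hztmin : ∀ u ∈ D, (∑ i, st i * zt i) + V zt ≤ (∑ i, st i * u i) + V u)
    (hwtmin : ∀ u ∈ D,
      (∑ i, (st + (1 / κ) • g zt) i * wt i) + V wt
        ≤ (∑ i, (st + (1 / κ) • g zt) i * u i) + V u) :
    (1 / (2 * κ)) * ∑ i, g wt i * (wt - zbar) i
      ≤ (∑ i, st1 i * (zt1 - zbar) i) + V zt1
        - (∑ i, st i * (zt - zbar) i) - V zt := by
  subst hst1
  have hm : ((1:ℝ)/2) • zt + ((1:ℝ)/2) • wt ∈ D :=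
    hD hztD hwtD (by norm_num) (by norm_num) (by norm_num)
  have hcD : (3:ℝ)⁻¹ • (zt + wt + zt1) ∈ D := by
    have h := hD hm hzt1D (a := (2:ℝ)/3) (b := (1:ℝ)/3) (by norm_num) (by norm_num)
      (by norm_num)
    have he : ((2:ℝ)/3) • (((1:ℝ)/2) • zt + ((1:ℝ)/2) • wt) + ((1:ℝ)/3) • zt1
        = (3:ℝ)⁻¹ • (zt + wt + zt1) := by
      funext i
      simp only [Pi.add_apply, Pi.smul_apply, smul_eq_mul]
      ring
    rwa [he] at h
  have h1 := hztmin _ hcD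
  have h2 := hwtmin zt1 hzt1D
  have h3 := harea zt hztD wt hwtD zt1 hzt1D
  have h3' : κ⁻¹ * (∑ i, (g wt - g zt) i * (wt - zt1) i)
      ≤ r zt + r wt + r zt1 - 3 * r ((3:ℝ)⁻¹ • (zt + wt + zt1)) := by
    rw [inv_mul_le_iff₀ hκ]
    exact h3
  simp only [hV] at h1 h2 ⊢
  rw [de_sum_sub_mul_sub] at h3'
  rw [de_sum_mul_sub gr, de_sum_mul_sub gr, de_sum_centroid st, de_sum_centroid gr] at h1
  rw [de_sum_add_smul, de_sum_add_smul, de_sum_mul_sub gr, de_sum_mul_sub gr] at h2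
  rw [de_sum_mul_sub (g wt), de_sum_add_smul, de_sum_mul_sub st, de_sum_mul_sub (g wt),
    de_sum_mul_sub st zt zbar, de_sum_mul_sub gr zt1, de_sum_mul_sub gr zt]
  have hk : (1:ℝ) / (2 * κ) = 2⁻¹ * κ⁻¹ := by
    rw [one_div, mul_inv]
  rw [hk]
  set A1 := ∑ i, st i * zt i with hA1
  set A2 := ∑ i, st i * wt i with hA2
  set A3 := ∑ i, st i * zt1 i with hA3
  set A4 := ∑ i, st i * zbar i with hA4
  set B1 := ∑ i, g wt i * wt i with hB1
  set B2 := ∑ i, g wt i * zt1 i with hB2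
  set B3 := ∑ i, g wt i * zbar i with hB3
  set C1 := ∑ i, g zt i * wt i with hC1
  set C2 := ∑ i, g zt i * zt1 i with hC2
  set E1 := ∑ i, gr i * zt i with hE1
  set E2 := ∑ i, gr i * wt i with hE2
  set E3 := ∑ i, gr i * zt1 i with hE3
  set E4 := ∑ i, gr i * zbar i with hE4
  rw [one_div] at h2
  generalize κ⁻¹ = u at h3' h2 ⊢
  linarith [h1, h2, h3']
end

section
/- Let f(x,y) be twice-differentiable and jointly convex on a product of convex sets X × Y. Consider alternating minimization: x_{k+1} = argmin_x f(x, y_k), y_{k+1} = argmin_y f(x_{k+1}, y). Suppose convex sets X_{k+1} ⊆ X containing x_{k+1} and Y_k ⊆ Y containing y_k exist such that for all x' ∈ X_{k+1}, y', y'' ∈ Y_k and some σ ≥ 1, ∇²f(x',y') ⪰ (1/σ)∇²_{yy}f(x_{k+1}, y''). Then for any x* ∈ X_{k+1}, y* ∈ Y_k: f(x_{k+1}, y_k) − f(x_{k+1}, y_{k+1}) ≥ (1/σ)(f(x_{k+1}, y_k) − f(x*, y*)). -/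
open Filter Topology

private lemma taylor2 (g g' g'' : ℝ → ℝ)
    (hg : ∀ t, HasDerivAt g (g' t) t)
    (hg' : ∀ t, HasDerivAt g' (g'' t) t) :
    ∃ c ∈ Set.Ioo (0:ℝ) 1, g 1 = g 0 + g' 0 + g'' c / 2 := by
  set K : ℝ := g 1 - g 0 - g' 0 with hK
  set φ : ℝ → ℝ := fun t => g 1 - g t - g' t * (1 - t) - K * (1 - t) ^ 2 with hφdef
  have hφ : ∀ t, HasDerivAt φ ((1 - t) * (2 * K - g'' t)) t := by
    intro t
    have h1 : HasDerivAt (fun s => g 1 - g s - g' s * (1 - s) - K * (1 - s) ^ 2)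
        (0 - g' t - (g'' t * (1 - t) + g' t * (0 - 1)) -
          K * ((2 : ℕ) * (1 - t) ^ 1 * (0 - 1))) t := by
      exact (((hasDerivAt_const t (g 1)).sub (hg t)).sub
        ((hg' t).mul ((hasDerivAt_const t 1).sub (hasDerivAt_id t)))).sub
        ((((hasDerivAt_const t 1).sub (hasDerivAt_id t)).pow 2).const_mul K)
    convert h1 using 1
    push_cast
    ring
  have hcont : ContinuousOn φ (Set.Icc 0 1) :=
    fun x _ => ((hφ x).continuousAt).continuousWithinAt
  have h0 : φ 0 = φ 1 := by simp only [hφdef, hK]; ring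
  obtain ⟨c, hc, hc0⟩ := exists_hasDerivAt_eq_zero (by norm_num : (0:ℝ) < 1) hcont h0
    (fun x _ => hφ x)
  refine ⟨c, hc, ?_⟩
  have h1c : (1 : ℝ) - c ≠ 0 := by have := hc.2; intro h; linarith
  have h2 : 2 * K - g'' c = 0 := by
    rcases mul_eq_zero.mp hc0 with h | h
    · exact absurd h h1c
    · exact h
  have h3 : g'' c = 2 * K := by linarith
  rw [h3, hK]; ring

private lemma line_deriv {E : Type*} [NormedAddCommGroup E] [NormedSpace ℝ E]
    (z0 w : E) (t : ℝ) : HasDerivAt (fun s : ℝ => z0 + s • w) w t := by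
  simpa using ((hasDerivAt_id t).smul_const w).const_add z0

private lemma taylor_line {E : Type*} [NormedAddCommGroup E] [NormedSpace ℝ E]
    (f : E → ℝ) (f' : E → E →L[ℝ] ℝ) (f'' : E → E →L[ℝ] E →L[ℝ] ℝ)
    (hf' : ∀ z, HasFDerivAt f (f' z) z)
    (hf'' : ∀ z, HasFDerivAt f' (f'' z) z) (z0 w : E) :
    ∃ c ∈ Set.Ioo (0:ℝ) 1,
      f (z0 + w) = f z0 + f' z0 w + f'' (z0 + c • w) w w / 2 := by
  have hg : ∀ t : ℝ, HasDerivAt (fun s : ℝ => f (z0 + s • w)) (f' (z0 + t • w) w) t :=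
    fun t => (hf' _).comp_hasDerivAt t (line_deriv z0 w t)
  have hg' : ∀ t : ℝ, HasDerivAt (fun s : ℝ => f' (z0 + s • w) w)
      (f'' (z0 + t • w) w w) t := by
    intro t
    have hc : HasDerivAt (fun s : ℝ => f' (z0 + s • w)) (f'' (z0 + t • w) w) t :=
      (hf'' _).comp_hasDerivAt t (line_deriv z0 w t)
    simpa using hc.clm_apply (hasDerivAt_const t w)
  obtain ⟨c, hc, h⟩ := taylor2 _ _ _ hg hg'
  refine ⟨c, hc, ?_⟩
  simpa using h

private lemma deriv_nonneg_of_min (φ : ℝ → ℝ) (d : ℝ) (hd : HasDerivAt φ d 0)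
    (hmin : ∀ t ∈ Set.Ioo (0:ℝ) 1, φ 0 ≤ φ t) : 0 ≤ d := by
  have h : Tendsto (slope φ 0) (𝓝[>] 0) (𝓝 d) := by
    have h2 := (hd.hasDerivWithinAt (s := Set.Ioi 0))
    rw [hasDerivWithinAt_iff_tendsto_slope] at h2
    simpa [Set.diff_singleton_eq_self (by simp : (0:ℝ) ∉ Set.Ioi 0)] using h2
  have hev : ∀ᶠ t in 𝓝[>] (0:ℝ), 0 ≤ slope φ 0 t := by
    filter_upwards [Ioo_mem_nhdsGT_of_mem (by norm_num : (0:ℝ) ∈ Set.Ico 0 1)] with t ht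
    rw [slope_def_field]
    apply div_nonneg (by linarith [hmin t ht]) (by simp; linarith [ht.1])
  exact ge_of_tendsto h hev

/-- Per-iteration progress of alternating minimization: let `f` be twice
differentiable and jointly convex on `X × Y`, with alternating steps
`x_{k+1} = argmin_{x ∈ X} f(x, y_k)` and `y_{k+1} = argmin_{y ∈ Y} f(x_{k+1}, y)`.
If convex sets `X_{k+1} ∋ x_{k+1}` and `Y_k ∋ y_k` exist such that for all
`x' ∈ X_{k+1}`, `y', y'' ∈ Y_k` and some `σ ≥ 1`,
`∇²f(x', y') ⪰ (1/σ) ∇²_{yy} f(x_{k+1}, y'')`, then for any `x* ∈ X_{k+1}`,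
`y* ∈ Y_k`: `f(x_{k+1}, y_k) − f(x_{k+1}, y_{k+1}) ≥ (1/σ)(f(x_{k+1}, y_k) − f(x*, y*))`. -/
theorem stmt_13 (a b : ℕ)
    (X : Set (Fin a → ℝ)) (Y : Set (Fin b → ℝ))
    (hX : Convex ℝ X) (hY : Convex ℝ Y)
    (f : (Fin a → ℝ) × (Fin b → ℝ) → ℝ)
    (f' : (Fin a → ℝ) × (Fin b → ℝ) → ((Fin a → ℝ) × (Fin b → ℝ)) →L[ℝ] ℝ)
    (f'' : (Fin a → ℝ) × (Fin b → ℝ) →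
      ((Fin a → ℝ) × (Fin b → ℝ)) →L[ℝ] ((Fin a → ℝ) × (Fin b → ℝ)) →L[ℝ] ℝ)
    (hf' : ∀ z, HasFDerivAt f (f' z) z)
    (hf'' : ∀ z, HasFDerivAt f' (f'' z) z)
    (hconv : ConvexOn ℝ (X ×ˢ Y) f)
    (σ : ℝ) (hσ : 1 ≤ σ)
    (yk : Fin b → ℝ) (hykY : yk ∈ Y)
    (xk1 : Fin a → ℝ) (hxk1X : xk1 ∈ X)
    (hxk1min : ∀ x ∈ X, f (xk1, yk) ≤ f (x, yk))
    (yk1 : Fin b → ℝ) (hyk1Y : yk1 ∈ Y)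
    (hyk1min : ∀ y ∈ Y, f (xk1, yk1) ≤ f (xk1, y))
    (Xk1 : Set (Fin a → ℝ)) (Yk : Set (Fin b → ℝ))
    (hXk1conv : Convex ℝ Xk1) (hYkconv : Convex ℝ Yk)
    (hXk1sub : Xk1 ⊆ X) (hYksub : Yk ⊆ Y)
    (hxk1mem : xk1 ∈ Xk1) (hykmem : yk ∈ Yk)
    (hdom : ∀ x' ∈ Xk1, ∀ y' ∈ Yk, ∀ y'' ∈ Yk,
      ∀ w : (Fin a → ℝ) × (Fin b → ℝ),
        f'' (x', y') w w ≥ (1 / σ) * f'' (xk1, y'') (0, w.2) (0, w.2)) :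
    ∀ xs ∈ Xk1, ∀ ys ∈ Yk,
      f (xk1, yk) - f (xk1, yk1) ≥ (1 / σ) * (f (xk1, yk) - f (xs, ys)) := by
  intro xs hxs ys hys
  have hσ0 : (0:ℝ) < σ := lt_of_lt_of_le one_pos hσ
  have hσi0 : (0:ℝ) ≤ 1 / σ := by positivity
  have hσi1 : 1 / σ ≤ 1 := by
    rw [div_le_one hσ0]; exact hσ
  -- Taylor expansion from (xk1, yk) to (xs, ys)
  obtain ⟨c, hc, hT1⟩ := taylor_line f f' f'' hf' hf'' (xk1, yk) (xs - xk1, ys - yk)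
  have e1 : ((xk1, yk) : (Fin a → ℝ) × (Fin b → ℝ)) + (xs - xk1, ys - yk) = (xs, ys) := by
    refine Prod.ext ?_ ?_ <;> simp
  have hp : ((xk1, yk) : (Fin a → ℝ) × (Fin b → ℝ)) + c • (xs - xk1, ys - yk)
      = (xk1 + c • (xs - xk1), yk + c • (ys - yk)) := by
    refine Prod.ext ?_ ?_ <;> simp [Prod.smul_mk]
  rw [e1, hp] at hT1
  -- Taylor expansion from (xk1, yk) to (xk1, yk + (1/σ)(ys - yk))
  obtain ⟨c', hc', hT2⟩ := taylor_line f f' f'' hf' hf'' (xk1, yk)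
      ((0 : Fin a → ℝ), (1/σ) • (ys - yk))
  have e2 : ((xk1, yk) : (Fin a → ℝ) × (Fin b → ℝ)) + ((0 : Fin a → ℝ), (1/σ) • (ys - yk))
      = (xk1, yk + (1/σ) • (ys - yk)) := by
    refine Prod.ext ?_ ?_ <;> simp
  have e3 : ((xk1, yk) : (Fin a → ℝ) × (Fin b → ℝ))
        + c' • ((0 : Fin a → ℝ), (1/σ) • (ys - yk))
      = (xk1, yk + (c' * (1/σ)) • (ys - yk)) := by
    refine Prod.ext ?_ ?_ <;> simp [Prod.smul_mk, smul_smul]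
  have hv : ((0 : Fin a → ℝ), (1/σ) • (ys - yk))
      = (1/σ) • (((0 : Fin a → ℝ), ys - yk) : (Fin a → ℝ) × (Fin b → ℝ)) := by
    refine Prod.ext ?_ ?_ <;> simp [Prod.smul_mk]
  rw [e2, e3, hv] at hT2
  have hlin1 : f' (xk1, yk) ((1/σ) • (((0 : Fin a → ℝ), ys - yk) : _))
      = (1/σ) * f' (xk1, yk) ((0 : Fin a → ℝ), ys - yk) := by
    rw [map_smul, smul_eq_mul]
  have hlin2 : f'' (xk1, yk + (c' * (1/σ)) • (ys - yk))
        ((1/σ) • (((0 : Fin a → ℝ), ys - yk) : _))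
        ((1/σ) • (((0 : Fin a → ℝ), ys - yk) : _))
      = (1/σ) * ((1/σ) * f'' (xk1, yk + (c' * (1/σ)) • (ys - yk))
        ((0 : Fin a → ℝ), ys - yk) ((0 : Fin a → ℝ), ys - yk)) := by
    simp only [map_smul, ContinuousLinearMap.smul_apply, smul_eq_mul]
  rw [hlin1, hlin2] at hT2
  -- memberships
  have hx'mem : xk1 + c • (xs - xk1) ∈ Xk1 := by
    have h := hXk1conv hxk1mem hxs (by linarith [hc.2] : (0:ℝ) ≤ 1 - c) hc.1.le (by ring)
    convert h using 1; module
  have hy'mem : yk + c • (ys - yk) ∈ Yk := by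
    have h := hYkconv hykmem hys (by linarith [hc.2] : (0:ℝ) ≤ 1 - c) hc.1.le (by ring)
    convert h using 1; module
  have hy''mem : yk + (c' * (1/σ)) • (ys - yk) ∈ Yk := by
    have h1 : (0:ℝ) ≤ c' * (1/σ) := mul_nonneg hc'.1.le hσi0
    have h2 : c' * (1/σ) ≤ 1 := by
      calc c' * (1/σ) ≤ 1 * 1 := by
            apply mul_le_mul hc'.2.le hσi1 hσi0 zero_le_one
        _ = 1 := by ring
    have h := hYkconv hykmem hys (by linarith : (0:ℝ) ≤ 1 - c' * (1/σ)) h1 (by ring)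
    convert h using 1; module
  -- Hessian domination
  have hQR := hdom _ hx'mem _ hy'mem _ hy''mem (xs - xk1, ys - yk)
  simp only at hQR
  -- first-order optimality in x
  have hD1 : 0 ≤ f' (xk1, yk) (xs - xk1, (0 : Fin b → ℝ)) := by
    apply deriv_nonneg_of_min
      (fun t : ℝ => f ((xk1, yk) + t • ((xs - xk1, (0 : Fin b → ℝ)) : _)))
    · have h := (hf' _).comp_hasDerivAt 0
        (line_deriv ((xk1, yk) : (Fin a → ℝ) × (Fin b → ℝ)) (xs - xk1, (0 : Fin b → ℝ)) 0)
      simpa [Function.comp_def] using h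
    · intro t ht
      have ept : ((xk1, yk) : (Fin a → ℝ) × (Fin b → ℝ)) + t • (xs - xk1, (0 : Fin b → ℝ))
          = (xk1 + t • (xs - xk1), yk) := by
        refine Prod.ext ?_ ?_ <;> simp [Prod.smul_mk]
      have hxmem : xk1 + t • (xs - xk1) ∈ X := by
        have h := hX hxk1X (hXk1sub hxs) (by linarith [ht.2] : (0:ℝ) ≤ 1 - t) ht.1.le (by ring)
        convert h using 1; module
      have h := hxk1min _ hxmem
      simpa [ept] using h
  -- split the gradient term
  have hsplit : f' (xk1, yk) (xs - xk1, ys - yk)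
      = f' (xk1, yk) (xs - xk1, (0 : Fin b → ℝ))
        + f' (xk1, yk) ((0 : Fin a → ℝ), ys - yk) := by
    rw [← map_add]
    congr 1
    refine Prod.ext ?_ ?_ <;> simp
  -- yk1 is the minimizer in y
  have hytY : yk + (1/σ) • (ys - yk) ∈ Y := by
    have h := hY hykY (hYksub hys) (by linarith : (0:ℝ) ≤ 1 - 1/σ) hσi0 (by ring)
    convert h using 1; module
  have hB := hyk1min _ hytY
  -- conclude
  rw [ge_iff_le, hT1]
  nlinarith [mul_nonneg hσi0 hD1,
    mul_le_mul_of_nonneg_left hQR hσi0, hT2, hB, hσi0]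
end

section
/- Let r(x,y) = 2M(10 Σ_j x_j log x_j + xᵀAᵀ(y²)) where A ∈ {0,1}^{2n×m} has columns of ℓ1-norm 2 and M > 0. Fix x₊ with positive entries and let X = {x : x ≥ x₊/2 entrywise} and Y = [−1,1]^{2n}. Then for any x' ∈ X and y', y'' ∈ Y, ∇²r(x', y') ⪰ (1/12)∇²_{yy} r(x₊, y''). -/
lemma stmt_14_key (M a xp x u v y : ℝ) (hM : 0 < M) (ha : a = 0 ∨ a = 1)
    (hxp : 0 < xp) (hx : xp / 2 ≤ x) (hy : |y| ≤ 1) :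
    (1 / 12) * (4 * M * (v ^ 2 * (a * xp)))
      ≤ 2 * M * (a * (5 * u ^ 2 / x + 4 * u * v * y + 2 * v ^ 2 * x)) := by
  rcases ha with h | h
  · simp [h]
  · subst h
    have hxpos : 0 < x := lt_of_lt_of_le (by linarith) hx
    have hy1 : -1 ≤ y ∧ y ≤ 1 := abs_le.mp hy
    rw [div_add' _ _ _ hxpos.ne', div_add' _ _ _ hxpos.ne']
    rw [one_mul, one_mul, mul_comm (2:ℝ) M, mul_div_assoc', le_div_iff₀ hxpos]
    nlinarith [sq_nonneg (3 * u + 2 * v * x * y), sq_nonneg (v * x),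
      mul_nonneg (mul_nonneg (sq_nonneg (v * x)) (by nlinarith [hy1.1, hy1.2] : (0:ℝ) ≤ 1 - y^2)) hM.le,
      mul_pos hxpos hxpos, sq_nonneg u, sq_nonneg v,
      mul_nonneg (mul_nonneg (sq_nonneg v) hM.le) (mul_pos hxpos hxpos).le,
      mul_nonneg (mul_nonneg (sq_nonneg v) hM.le) (by nlinarith : (0:ℝ) ≤ x * (2*x - xp))]

/-- Hessian domination for Sherman's regularizer
`r(x,y) = 2M(10 Σⱼ xⱼ log xⱼ + xᵀAᵀ(y²))`: for `x₊` entrywise positive,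
`X = {x : x ≥ x₊/2}` and `Y = [−1,1]^{2n}`, for any `x' ∈ X` and `y', y'' ∈ Y`,
`∇²r(x', y') ⪰ (1/12) ∇²_{yy} r(x₊, y'')`, stated via the explicit quadratic forms
`(u,v)ᵀ ∇²r(x,y) (u,v) = 2M Σ_{ij} A_{ij}(5uⱼ²/xⱼ + 4uⱼvᵢyᵢ + 2vᵢ²xⱼ)` and
`(u,v)ᵀ ∇²_{yy} r(x₊, y'') (u,v) = 4M Σᵢ vᵢ² (Ax₊)ᵢ`. -/
theorem stmt_14 (n m : ℕ)
    (A : Fin (2 * n) → Fin m → ℝ)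
    (hA01 : ∀ i j, A i j = 0 ∨ A i j = 1)
    (hAcol : ∀ j, ∑ i, A i j = 2)
    (M : ℝ) (hM : 0 < M)
    (xp : Fin m → ℝ) (hxp : ∀ j, 0 < xp j)
    (x' : Fin m → ℝ) (hx' : ∀ j, xp j / 2 ≤ x' j)
    (y' y'' : Fin (2 * n) → ℝ) (hy' : ∀ i, |y' i| ≤ 1) (hy'' : ∀ i, |y'' i| ≤ 1) :
    ∀ (u : Fin m → ℝ) (v : Fin (2 * n) → ℝ),
      2 * M * ∑ i, ∑ j, A i j *
          (5 * (u j) ^ 2 / x' j + 4 * u j * v i * y' i + 2 * (v i) ^ 2 * x' j)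
        ≥ (1 / 12) * (4 * M * ∑ i, (v i) ^ 2 * ∑ j, A i j * xp j) := by
  intro u v
  rw [ge_iff_le]
  calc (1 / 12) * (4 * M * ∑ i, (v i) ^ 2 * ∑ j, A i j * xp j)
      = ∑ i, ∑ j, (1 / 12) * (4 * M * (v i ^ 2 * (A i j * xp j))) := by
        rw [Finset.mul_sum, Finset.mul_sum]
        refine Finset.sum_congr rfl fun i _ => ?_
        rw [Finset.mul_sum, Finset.mul_sum, Finset.mul_sum]
    _ ≤ ∑ i, ∑ j, 2 * M * (A i j *
          (5 * (u j) ^ 2 / x' j + 4 * u j * v i * y' i + 2 * (v i) ^ 2 * x' j)) := by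
        refine Finset.sum_le_sum fun i _ => Finset.sum_le_sum fun j _ => ?_
        exact stmt_14_key M (A i j) (xp j) (x' j) (u j) (v i) (y' i) hM
          (hA01 i j) (hxp j) (hx' j) (hy' i)
    _ = 2 * M * ∑ i, ∑ j, A i j *
          (5 * (u j) ^ 2 / x' j + 4 * u j * v i * y' i + 2 * (v i) ^ 2 * x' j) := by
        rw [Finset.mul_sum]
        exact Finset.sum_congr rfl fun i _ => (Finset.mul_sum _ _ _).symm
end

section
/- For r as in Sherman's regularizer and any y ∈ [−1,1]^{2n} and x with positive entries, the diagonal matrix D(x) with x-block 2M‖A_{:j}‖₁ diag(1/x_j) and y-block 2M diag((Ax)_i) satisfies D(x) ⪯ ∇²r(x,y) ⪯ 6 D(x). -/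
lemma scalar_lower (x y u v : ℝ) (hx : 0 < x) (hy : |y| ≤ 1) :
    u ^ 2 / x + v ^ 2 * x ≤ 5 * u ^ 2 / x + 4 * u * v * y + 2 * v ^ 2 * x := by
  have hy2 : y ^ 2 ≤ 1 := by nlinarith [sq_abs y, abs_nonneg y]
  rw [show u ^ 2 / x + v ^ 2 * x = (u ^ 2 + v ^ 2 * x * x) / x by field_simp,
      show 5 * u ^ 2 / x + 4 * u * v * y + 2 * v ^ 2 * x
        = (5 * u ^ 2 + 4 * u * v * y * x + 2 * v ^ 2 * x * x) / x by field_simp]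
  gcongr ?_ / x
  nlinarith [sq_nonneg (2 * u + v * x * y), sq_nonneg (v * x), sq_nonneg x]

lemma scalar_upper (x y u v : ℝ) (hx : 0 < x) (hy : |y| ≤ 1) :
    5 * u ^ 2 / x + 4 * u * v * y + 2 * v ^ 2 * x ≤ 6 * (u ^ 2 / x + v ^ 2 * x) := by
  have hy2 : y ^ 2 ≤ 1 := by nlinarith [sq_abs y, abs_nonneg y]
  rw [show 5 * u ^ 2 / x + 4 * u * v * y + 2 * v ^ 2 * x
        = (5 * u ^ 2 + 4 * u * v * y * x + 2 * v ^ 2 * x * x) / x by field_simp,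
      show 6 * (u ^ 2 / x + v ^ 2 * x) = (6 * u ^ 2 + 6 * v ^ 2 * x * x) / x by
        field_simp]
  gcongr ?_ / x
  nlinarith [sq_nonneg (u - 2 * v * x * y), sq_nonneg (v * x)]

/-- Diagonal approximation of the Hessian of Sherman's regularizer
`r(x,y) = 2M(10 Σⱼ xⱼ log xⱼ + xᵀAᵀ(y²))`: for `x` entrywise positive and
`y ∈ [−1,1]^{2n}`, the diagonal matrix `D(x)` with `x`-block
`2M‖A_{:j}‖₁ diag(1/xⱼ)` and `y`-block `2M diag((Ax)ᵢ)` satisfies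
`D(x) ⪯ ∇²r(x,y) ⪯ 6 D(x)`, stated via quadratic forms:
`2M Σ_{ij} A_{ij}(uⱼ²/xⱼ + vᵢ²xⱼ) ≤ 2M Σ_{ij} A_{ij}(5uⱼ²/xⱼ + 4uⱼvᵢyᵢ + 2vᵢ²xⱼ)
  ≤ 6 · 2M Σ_{ij} A_{ij}(uⱼ²/xⱼ + vᵢ²xⱼ)`. -/
theorem stmt_15 (n m : ℕ)
    (A : Fin (2 * n) → Fin m → ℝ)
    (hA01 : ∀ i j, A i j = 0 ∨ A i j = 1)
    (hAcol : ∀ j, ∑ i, A i j = 2)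
    (M : ℝ) (hM : 0 < M)
    (x : Fin m → ℝ) (hx : ∀ j, 0 < x j)
    (y : Fin (2 * n) → ℝ) (hy : ∀ i, |y i| ≤ 1) :
    ∀ (u : Fin m → ℝ) (v : Fin (2 * n) → ℝ),
      (2 * M * ∑ i, ∑ j, A i j * ((u j) ^ 2 / x j + (v i) ^ 2 * x j)
        ≤ 2 * M * ∑ i, ∑ j, A i j *
            (5 * (u j) ^ 2 / x j + 4 * u j * v i * y i + 2 * (v i) ^ 2 * x j)) ∧
      (2 * M * ∑ i, ∑ j, A i j *
            (5 * (u j) ^ 2 / x j + 4 * u j * v i * y i + 2 * (v i) ^ 2 * x j)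
        ≤ 6 * (2 * M * ∑ i, ∑ j, A i j * ((u j) ^ 2 / x j + (v i) ^ 2 * x j))) := by
  intro u v
  have hAnn : ∀ i j, 0 ≤ A i j := fun i j => by rcases hA01 i j with h | h <;> simp [h]
  constructor
  · apply mul_le_mul_of_nonneg_left _ (by positivity)
    apply Finset.sum_le_sum; intro i _
    apply Finset.sum_le_sum; intro j _
    exact mul_le_mul_of_nonneg_left (scalar_lower _ _ _ _ (hx j) (hy i)) (hAnn i j)
  · have hsum : ∑ i, ∑ j, A i j *
        (5 * (u j) ^ 2 / x j + 4 * u j * v i * y i + 2 * (v i) ^ 2 * x j)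
        ≤ ∑ i, ∑ j, 6 * (A i j * ((u j) ^ 2 / x j + (v i) ^ 2 * x j)) := by
      apply Finset.sum_le_sum; intro i _
      apply Finset.sum_le_sum; intro j _
      calc A i j * (5 * (u j) ^ 2 / x j + 4 * u j * v i * y i + 2 * (v i) ^ 2 * x j)
          ≤ A i j * (6 * ((u j) ^ 2 / x j + (v i) ^ 2 * x j)) :=
            mul_le_mul_of_nonneg_left (scalar_upper _ _ _ _ (hx j) (hy i)) (hAnn i j)
        _ = 6 * (A i j * ((u j) ^ 2 / x j + (v i) ^ 2 * x j)) := by ring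
    simp_rw [← Finset.mul_sum] at hsum
    nlinarith [hsum, hM.le]
end

section
/- In the alternating minimization scheme for f(x,y) = ⟨ξ,x⟩ + ⟨η,y⟩ + r(x,y) over Δᵐ × [−1,1]^{2n}, where r is Sherman's regularizer, the function error f(x_k, y_k) − f(x_opt, y_opt) decreases by a factor of at least 1/24 per full iteration: (23/24)(f(x_{k+1}, y_k) − f(x_opt, y_opt)) ≥ f(x_{k+2}, y_{k+1}) − f(x_opt, y_opt). -/
open Real Finset
open Real

private lemma aux_log {y : ℝ} (hy : 1 ≤ y) : 2*(y-1)/(y+1) ≤ Real.log y := by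
  have key : MonotoneOn (fun y : ℝ => Real.log y - 2*(y-1)/(y+1)) (Set.Ici 1) := by
    apply monotoneOn_of_deriv_nonneg (convex_Ici 1)
    · apply ContinuousOn.sub
      · exact Real.continuousOn_log.mono (by intro x hx; simp at hx ⊢; linarith)
      · apply ContinuousOn.div
        · fun_prop
        · fun_prop
        · intro x hx; simp at hx; intro h; linarith
    · intro x hx
      rw [interior_Ici] at hx
      simp only [Set.mem_Ioi] at hx
      apply DifferentiableAt.differentiableWithinAt
      apply DifferentiableAt.sub
      · exact Real.differentiableAt_log (by linarith)
      · apply DifferentiableAt.div <;> try fun_prop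
        intro h; linarith
    · intro x hx
      rw [interior_Ici] at hx
      simp only [Set.mem_Ioi] at hx
      have hx0 : x ≠ 0 := by linarith
      have hx1 : x + 1 ≠ 0 := by linarith
      have hd : HasDerivAt (fun y : ℝ => Real.log y - 2*(y-1)/(y+1))
          (1/x - (2*(x+1) - 2*(x-1)*1)/(x+1)^2) x := by
        apply HasDerivAt.sub
        · simpa using Real.hasDerivAt_log hx0
        · have h1 : HasDerivAt (fun y : ℝ => 2*(y-1)) 2 x := by
            simpa using ((hasDerivAt_id x).sub_const 1).const_mul 2
          have h2 : HasDerivAt (fun y : ℝ => y+1) 1 x := by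
            simpa using (hasDerivAt_id x).add_const 1
          exact h1.div h2 hx1
      rw [hd.deriv]
      have h2 : (0:ℝ) < x := by linarith
      rw [sub_nonneg, div_le_div_iff₀ (by positivity) h2]
      nlinarith [sq_nonneg (x-1)]
  have h := key (Set.mem_Ici.2 le_rfl) (Set.mem_Ici.2 hy) hy
  simp at h
  linarith

private lemma aux_F_half {t : ℝ} (h0 : 1/2 ≤ t) (h1 : t ≤ 1) :
    (2*t-1)^2/2 ≤ t*Real.log t + (1-t)*Real.log (1-t) + Real.log 2 := by
  rcases eq_or_lt_of_le h1 with rfl | h1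
  · simp
    have := Real.log_two_gt_d9
    norm_num
    linarith
  · set F : ℝ → ℝ := fun t => t*Real.log t + (1-t)*Real.log (1-t) + Real.log 2 - (2*t-1)^2/2
    have key : MonotoneOn F (Set.Ico (1/2 : ℝ) 1) := by
      apply monotoneOn_of_deriv_nonneg (convex_Ico _ _)
      · apply ContinuousOn.sub
        · apply Continuous.continuousOn
          have c1 : Continuous fun t : ℝ => t * Real.log t := Real.continuous_mul_log
          have c2 : Continuous fun t : ℝ => (1-t) * Real.log (1-t) :=
            Real.continuous_mul_log.comp (by fun_prop)
          continuity
        · fun_prop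
      · intro x hx
        rw [interior_Ico] at hx
        obtain ⟨ha, hb⟩ := hx
        apply DifferentiableAt.differentiableWithinAt
        have d1 : DifferentiableAt ℝ (fun t : ℝ => t * Real.log t) x :=
          (Real.hasDerivAt_mul_log (by linarith : x ≠ 0)).differentiableAt
        have d2 : DifferentiableAt ℝ (fun t : ℝ => (1-t) * Real.log (1-t)) x := by
          have := ((Real.hasDerivAt_mul_log (by intro h; linarith : (1:ℝ)-x ≠ 0)).comp x
            (((hasDerivAt_id x).const_sub 1)))
          exact this.differentiableAt
        fun_prop
      · intro x hx
        rw [interior_Ico] at hx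
        obtain ⟨ha, hb⟩ := hx
        have hx0 : x ≠ 0 := by intro h; rw [h] at ha; norm_num at ha
        have hx1 : (1:ℝ) - x ≠ 0 := ne_of_gt (by linarith : (0:ℝ) < 1 - x)
        have hd : HasDerivAt F ((Real.log x + 1) + (Real.log (1-x) + 1) * (-1) - (2*(2*x-1))) x := by
          apply HasDerivAt.sub
          · apply HasDerivAt.add_const
            apply HasDerivAt.add
            · exact Real.hasDerivAt_mul_log hx0
            · exact (Real.hasDerivAt_mul_log hx1).comp x ((hasDerivAt_id x).const_sub 1)
          · have : HasDerivAt (fun t : ℝ => (2*t-1)^2/2) (2*(2*x-1)*2/2) x := by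
              have hb : HasDerivAt (fun t : ℝ => 2*t-1) 2 x := by
                simpa using ((hasDerivAt_id x).const_mul 2).sub_const 1
              simpa using (hb.pow 2).div_const 2
            simpa using this
        rw [hd.deriv]
        have hlog : Real.log (x/(1-x)) = Real.log x - Real.log (1-x) :=
          Real.log_div hx0 hx1
        have hy : 1 ≤ x/(1-x) := by
          rw [le_div_iff₀ (by linarith)]; linarith
        have := aux_log hy
        have heq : 2*(x/(1-x)-1)/(x/(1-x)+1) = 2*(2*x-1) := by
          rw [div_eq_iff]
          · field_simp
            ring
          · intro h
            have h1x : (0:ℝ) < 1 - x := by linarith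
            rw [div_add' _ _ _ (ne_of_gt h1x)] at h
            have := div_eq_zero_iff.1 h
            rcases this with h' | h'
            · linarith
            · exact hx1 (by linarith)
        rw [heq, hlog] at this
        linarith
    have hF := key (Set.mem_Ico.2 ⟨le_rfl, by norm_num⟩) (Set.mem_Ico.2 ⟨h0, h1⟩) h0
    have hF12 : F (1/2) = 0 := by
      simp only [F]
      norm_num
      rw [show (1:ℝ)/2 = 2⁻¹ by norm_num, Real.log_inv]
      ring
    simp only [F] at hF hF12
    linarith

private lemma aux_F {t : ℝ} (h0 : 0 ≤ t) (h1 : t ≤ 1) :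
    (2*t-1)^2/2 ≤ t*Real.log t + (1-t)*Real.log (1-t) + Real.log 2 := by
  rcases le_or_gt (1/2) t with h | h
  · exact aux_F_half h h1
  · have := aux_F_half (t := 1 - t) (by linarith) (by linarith)
    have e : 1 - (1-t) = t := by ring
    rw [e] at this
    calc (2*t-1)^2/2 = (2*(1-t)-1)^2/2 := by ring
    _ ≤ (1-t)*Real.log (1-t) + t*Real.log t + Real.log 2 := this
    _ = t*Real.log t + (1-t)*Real.log (1-t) + Real.log 2 := by ring

private lemma aux_ent {p q : ℝ} (hp : 0 ≤ p) (hq : 0 ≤ q) :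
    (p-q)^2/(4*(p+q)) ≤ (p*Real.log p + q*Real.log q)/2 - ((p+q)/2)*Real.log ((p+q)/2) := by
  rcases eq_or_lt_of_le (by linarith : (0:ℝ) ≤ p + q) with h0 | h0
  · have hp0 : p = 0 := by linarith
    have hq0 : q = 0 := by linarith
    simp [hp0, hq0]
  · set σ := p + q with hσ
    set t := p / σ with ht
    have htq : q / σ = 1 - t := by
      rw [ht, eq_sub_iff_add_eq, ← add_div, show q + p = σ by rw [hσ]; ring,
        div_self (ne_of_gt h0)]
    have h0t : 0 ≤ t := div_nonneg hp (le_of_lt h0)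
    have ht1 : t ≤ 1 := by
      rw [div_le_one h0]; linarith
    have hF := aux_F h0t ht1
    have hpt : p = σ * t := by rw [ht, mul_comm, div_mul_cancel₀ _ (ne_of_gt h0)]
    have hqt : q = σ * (1 - t) := by rw [← htq, mul_comm, div_mul_cancel₀ _ (ne_of_gt h0)]
    have hlogp : p * Real.log p = σ * t * (Real.log σ + Real.log t) := by
      rcases eq_or_lt_of_le h0t with h | h
      · have ht0 : t = 0 := h.symm
        have hp0 : p = 0 := by rw [hpt, ht0, mul_zero]
        rw [hp0, ht0]; simp
      · rw [hpt, Real.log_mul (ne_of_gt h0) (ne_of_gt h)]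
    have hlogq : q * Real.log q = σ * (1-t) * (Real.log σ + Real.log (1-t)) := by
      rcases eq_or_lt_of_le (by linarith : (0:ℝ) ≤ 1 - t) with h | h
      · have ht0 : 1 - t = 0 := h.symm
        rw [hqt, ht0]; simp
      · rw [hqt, Real.log_mul (ne_of_gt h0) (ne_of_gt h)]
    have hlogm : ((p+q)/2) * Real.log ((p+q)/2) = (σ/2) * (Real.log σ - Real.log 2) := by
      rw [← hσ, Real.log_div (ne_of_gt h0) (by norm_num)]
    have hpq : p - q = σ * (2*t - 1) := by rw [hpt, hqt]; ring
    rw [hlogp, hlogq, hlogm, hpq]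
    have key : (2*t-1)^2/2 ≤ t*Real.log t + (1-t)*Real.log (1-t) + Real.log 2 := hF
    have expand : (σ * (2*t-1))^2/(4*σ) = (σ/2) * ((2*t-1)^2/2) := by
      field_simp
      ring
    rw [expand]
    have hσ2 : (0:ℝ) < σ/2 := by linarith
    calc (σ/2) * ((2*t-1)^2/2) ≤ (σ/2) * (t*Real.log t + (1-t)*Real.log (1-t) + Real.log 2) := by
          exact mul_le_mul_of_nonneg_left key (le_of_lt hσ2)
    _ = (σ * t * (Real.log σ + Real.log t) + σ * (1-t) * (Real.log σ + Real.log (1-t)))/2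
        - (σ/2) * (Real.log σ - Real.log 2) := by ring

private lemma aux_quad {p q u v : ℝ} (hp : 0 ≤ p) (hq : 0 ≤ q)
    (hu : |u| ≤ 1) (hv : |v| ≤ 1) :
    ((p+q)/2) * ((u+v)/2)^2 - (p*u^2 + q*v^2)/2 ≤ (p-q)^2/(2*(p+q)) := by
  rcases eq_or_lt_of_le (by linarith : (0:ℝ) ≤ p + q) with h0 | h0
  · have hp0 : p = 0 := by linarith
    have hq0 : q = 0 := by linarith
    simp [hp0, hq0]
  · rw [le_div_iff₀ (show (0:ℝ) < 2*(p+q) by linarith)]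
    have hu1 := abs_le.1 hu
    have hv1 := abs_le.1 hv
    nlinarith [sq_nonneg (2*(p-q) + (p+q)/2*(u-v)*(u+v)),
      mul_nonneg (mul_nonneg (by linarith : (0:ℝ) ≤ 2-(u+v)) (by linarith : (0:ℝ) ≤ 2+(u+v)))
        (sq_nonneg ((p+q)/2*(u-v)))]

private lemma aux_amgm {p q e : ℝ} (hp : 0 ≤ p) (hq : 0 ≤ q) (he : |e| ≤ 2) :
    4 * |q - p| * |e| ≤ 2 * (((p+q)/2) * e^2 + (q-p)^2/((p+q)/2)) := by
  rcases eq_or_lt_of_le (by linarith : (0:ℝ) ≤ p + q) with h0 | h0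
  · have hp0 : p = 0 := by linarith
    have hq0 : q = 0 := by linarith
    simp [hp0, hq0]
  · have hm : (0:ℝ) < (p+q)/2 := by linarith
    rw [show 2*(((p+q)/2)*e^2 + (q-p)^2/((p+q)/2)) = (2*((p+q)/2)^2*e^2 + 2*(q-p)^2)/((p+q)/2)
      by field_simp]
    rw [le_div_iff₀ hm]
    nlinarith [sq_nonneg ((p+q)/2*|e| - |q-p|), sq_abs e, sq_abs (q-p), abs_nonneg e,
      abs_nonneg (q-p)]

set_option maxHeartbeats 2000000 in
/-- Linear convergence of alternating minimization for
`f(x,y) = ⟨ξ,x⟩ + ⟨η,y⟩ + r(x,y)` over `Δᵐ × [−1,1]^{2n}`, where `r` is Sherman's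
regularizer: the function error decreases by a factor of at least `1/24` per full
iteration, i.e. `(23/24)(f(x_{k+1}, y_k) − f(x_opt, y_opt)) ≥ f(x_{k+2}, y_{k+1}) − f(x_opt, y_opt)`. -/
theorem stmt_16 (n m : ℕ)
    (A : Fin (2 * n) → Fin m → ℝ)
    (hA01 : ∀ i j, A i j = 0 ∨ A i j = 1)
    (hAcol : ∀ j, ∑ i, A i j = 2)
    (M : ℝ) (hM : 0 < M)
    (ξ : Fin m → ℝ) (η : Fin (2 * n) → ℝ)
    (r : (Fin m → ℝ) → (Fin (2 * n) → ℝ) → ℝ)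
    (hr : ∀ x y, r x y =
      2 * M * (10 * ∑ j, x j * Real.log (x j) + ∑ i, ∑ j, A i j * x j * (y i) ^ 2))
    (f : (Fin m → ℝ) → (Fin (2 * n) → ℝ) → ℝ)
    (hf : ∀ x y, f x y = (∑ j, ξ j * x j) + (∑ i, η i * y i) + r x y)
    (yk : Fin (2 * n) → ℝ) (hyk : ∀ i, |yk i| ≤ 1)
    (xk1 : Fin m → ℝ) (hxk1 : (∀ j, 0 ≤ xk1 j) ∧ (∑ j, xk1 j) = 1)
    (hxk1min : ∀ x : Fin m → ℝ, (∀ j, 0 ≤ x j) → (∑ j, x j) = 1 → f xk1 yk ≤ f x yk)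
    (yk1 : Fin (2 * n) → ℝ) (hyk1 : ∀ i, |yk1 i| ≤ 1)
    (hyk1min : ∀ y : Fin (2 * n) → ℝ, (∀ i, |y i| ≤ 1) → f xk1 yk1 ≤ f xk1 y)
    (xk2 : Fin m → ℝ) (hxk2 : (∀ j, 0 ≤ xk2 j) ∧ (∑ j, xk2 j) = 1)
    (hxk2min : ∀ x : Fin m → ℝ, (∀ j, 0 ≤ x j) → (∑ j, x j) = 1 → f xk2 yk1 ≤ f x yk1)
    (xo : Fin m → ℝ) (yo : Fin (2 * n) → ℝ)
    (hxo : (∀ j, 0 ≤ xo j) ∧ (∑ j, xo j) = 1) (hyo : ∀ i, |yo i| ≤ 1)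
    (hopt : ∀ (x : Fin m → ℝ) (y : Fin (2 * n) → ℝ),
      (∀ j, 0 ≤ x j) → (∑ j, x j) = 1 → (∀ i, |y i| ≤ 1) → f xo yo ≤ f x y) :
    (23 / 24 : ℝ) * (f xk1 yk - f xo yo) ≥ f xk2 yk1 - f xo yo := by
  obtain ⟨hxk1n, hxk1s⟩ := hxk1
  obtain ⟨hxk2n, hxk2s⟩ := hxk2
  obtain ⟨hxon, hxos⟩ := hxo
  -- midpoints
  set xh : Fin m → ℝ := fun j => (xk1 j + xo j)/2 with hxhdef
  set yh : Fin (2 * n) → ℝ := fun i => (yk i + yo i)/2 with hyhdef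
  have hxhn : ∀ j, 0 ≤ xh j := fun j => by
    have := hxk1n j; have := hxon j; simp only [hxhdef]; linarith
  have hxhs : (∑ j, xh j) = 1 := by
    simp only [hxhdef, ← Finset.sum_div, Finset.sum_add_distrib, hxk1s, hxos]; norm_num
  have hyhb : ∀ i, |yh i| ≤ 1 := fun i => by
    have h1 := abs_le.1 (hyk i); have h2 := abs_le.1 (hyo i)
    simp only [hyhdef]; rw [abs_le]; constructor <;> [linarith [h1.1, h2.1]; linarith [h1.2, h2.2]]
  -- expanded form of f
  have fexp : ∀ x y, f x y = (∑ j, ξ j * x j) + (∑ i, η i * y i)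
      + 20*M*(∑ j, x j * Real.log (x j)) + 2*M*(∑ i, (∑ j, A i j * x j) * (y i)^2) := by
    intro x y
    rw [hf, hr, show (∑ i, ∑ j, A i j * x j * (y i)^2) = ∑ i, (∑ j, A i j * x j) * (y i)^2 from
      Finset.sum_congr rfl fun i _ => by rw [Finset.sum_mul]]
    ring
  -- difference in y at fixed x
  have ydiff : ∀ (x : Fin m → ℝ) (y y' : Fin (2 * n) → ℝ), f x y - f x y'
      = ∑ i, (η i * (y i - y' i) + 2*M*((∑ j, A i j * x j)*((y i)^2 - (y' i)^2))) := by
    intro x y y'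
    have e1 : ∑ i, (η i * (y i - y' i) + 2*M*((∑ j, A i j * x j)*((y i)^2 - (y' i)^2)))
        = ((∑ i, η i * y i) - ∑ i, η i * y' i)
          + (2*M*(∑ i, (∑ j, A i j * x j)*(y i)^2) - 2*M*(∑ i, (∑ j, A i j * x j)*(y' i)^2)) := by
      rw [Finset.mul_sum, Finset.mul_sum, ← Finset.sum_sub_distrib, ← Finset.sum_sub_distrib,
        ← Finset.sum_add_distrib]
      exact Finset.sum_congr rfl fun i _ => by ring
    rw [fexp x y, fexp x y', e1]
    ring
  -- double difference
  have xdiff2 : ∀ (x x' : Fin m → ℝ) (y y' : Fin (2 * n) → ℝ),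
      (f x y - f x' y) - (f x y' - f x' y')
      = 2*M*∑ i, ((∑ j, A i j * x j) - (∑ j, A i j * x' j))*((y i)^2 - (y' i)^2) := by
    intro x x' y y'
    have e1 : 2*M*∑ i, ((∑ j, A i j * x j) - (∑ j, A i j * x' j))*((y i)^2 - (y' i)^2)
        = (2*M*(∑ i, (∑ j, A i j * x j)*(y i)^2) - 2*M*(∑ i, (∑ j, A i j * x' j)*(y i)^2))
          - (2*M*(∑ i, (∑ j, A i j * x j)*(y' i)^2)
              - 2*M*(∑ i, (∑ j, A i j * x' j)*(y' i)^2)) := by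
      rw [Finset.mul_sum, Finset.mul_sum, Finset.mul_sum, Finset.mul_sum, Finset.mul_sum,
        ← Finset.sum_sub_distrib, ← Finset.sum_sub_distrib, ← Finset.sum_sub_distrib]
      exact Finset.sum_congr rfl fun i _ => by ring
    rw [fexp x y, fexp x' y, fexp x y', fexp x' y', e1]
    ring
  have hA0 : ∀ i j, 0 ≤ A i j := fun i j => by rcases hA01 i j with h | h <;> rw [h] <;> norm_num
  have han : ∀ i, 0 ≤ ∑ j, A i j * xk1 j :=
    fun i => Finset.sum_nonneg fun j _ => mul_nonneg (hA0 i j) (hxk1n j)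
  -- midpoint column sums
  have hbc : ∀ i, (∑ j, A i j * xh j)
      = ((∑ j, A i j * xk1 j) + (∑ j, A i j * xo j))/2 := by
    intro i
    rw [← Finset.sum_add_distrib, Finset.sum_div]
    exact Finset.sum_congr rfl fun j _ => by simp only [hxhdef]; ring
  have hdiffc : ∀ i, (∑ j, A i j * xo j) - (∑ j, A i j * xk1 j)
      = ∑ j, A i j * (xo j - xk1 j) := by
    intro i
    rw [← Finset.sum_sub_distrib]
    exact Finset.sum_congr rfl fun j _ => by ring
  -- 1-D strong optimality of yk1
  have oneD : ∀ (i : Fin (2 * n)) (t : ℝ), |t| ≤ 1 →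
      0 ≤ (η i + 4*M*(∑ j, A i j * xk1 j)*(yk1 i))*(t - yk1 i)
        + M*(∑ j, A i j * xk1 j)*(t - yk1 i)^2 := by
    intro i t ht
    set s : ℝ := (yk1 i + t)/2 with hsdef
    have hu := abs_le.1 (hyk1 i)
    have ht' := abs_le.1 ht
    have hs : |s| ≤ 1 := by
      rw [hsdef, abs_le]; constructor <;> [linarith [hu.1, ht'.1]; linarith [hu.2, ht'.2]]
    set y' : Fin (2 * n) → ℝ := fun i' => if i' = i then s else yk1 i' with hy'def
    have hy'b : ∀ i', |y' i'| ≤ 1 := by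
      intro i'
      by_cases h : i' = i
      · simp only [hy'def, if_pos h]; exact hs
      · simp only [hy'def, if_neg h]; exact hyk1 i'
    have hmin := hyk1min y' hy'b
    have hdiff := ydiff xk1 yk1 y'
    have hsum : ∑ i', (η i' * (yk1 i' - y' i')
        + 2*M*((∑ j, A i' j * xk1 j)*((yk1 i')^2 - (y' i')^2)))
        = η i * (yk1 i - s) + 2*M*((∑ j, A i j * xk1 j)*((yk1 i)^2 - s^2)) := by
      have h0 : ∀ b ∈ Finset.univ, b ≠ i → η b * (yk1 b - y' b)
          + 2*M*((∑ j, A b j * xk1 j)*((yk1 b)^2 - (y' b)^2)) = 0 := by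
        intro b _ hb
        simp only [hy'def, if_neg hb]
        ring
      rw [Finset.sum_eq_single_of_mem i (Finset.mem_univ i) h0]
      simp [hy'def]
    rw [hsum] at hdiff
    have hid : (η i + 4*M*(∑ j, A i j * xk1 j)*(yk1 i))*(t - yk1 i)
        + M*(∑ j, A i j * xk1 j)*(t - yk1 i)^2
        = -2*(η i * (yk1 i - s) + 2*M*((∑ j, A i j * xk1 j)*((yk1 i)^2 - s^2))) := by
      rw [hsdef]; ring
    rw [hid]
    linarith
  -- SS
  set Q : Fin m → ℝ := fun j => (xk1 j - xo j)^2/(4*(xk1 j + xo j)) with hQdef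
  set SS : ℝ := ∑ j, Q j with hSSdef
  have hQ0 : ∀ j, 0 ≤ Q j := fun j => by
    simp only [hQdef]
    apply div_nonneg (sq_nonneg _)
    have := hxk1n j; have := hxon j; linarith
  have hSS0 : 0 ≤ SS := Finset.sum_nonneg fun j _ => hQ0 j
  -- H4 : midpoint bound
  have H4 : f xh yh ≤ (f xk1 yk + f xo yo)/2 - 12*M*SS := by
    have hlin1 : ∑ j, ξ j * xh j = ((∑ j, ξ j * xk1 j) + ∑ j, ξ j * xo j)/2 := by
      rw [← Finset.sum_add_distrib, Finset.sum_div]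
      exact Finset.sum_congr rfl fun j _ => by simp only [hxhdef]; ring
    have hlin2 : ∑ i, η i * yh i = ((∑ i, η i * yk i) + ∑ i, η i * yo i)/2 := by
      rw [← Finset.sum_add_distrib, Finset.sum_div]
      exact Finset.sum_congr rfl fun i _ => by simp only [hyhdef]; ring
    have hent : ∑ j, xh j * Real.log (xh j)
        ≤ ((∑ j, xk1 j * Real.log (xk1 j)) + ∑ j, xo j * Real.log (xo j))/2 - SS := by
      have key : ∀ j, xh j * Real.log (xh j)
          ≤ (xk1 j * Real.log (xk1 j) + xo j * Real.log (xo j))/2 - Q j := by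
        intro j
        have h := aux_ent (hxk1n j) (hxon j)
        simp only [hxhdef, hQdef]
        linarith
      calc ∑ j, xh j * Real.log (xh j)
          ≤ ∑ j, ((xk1 j * Real.log (xk1 j) + xo j * Real.log (xo j))/2 - Q j) :=
            Finset.sum_le_sum fun j _ => key j
        _ = ((∑ j, xk1 j * Real.log (xk1 j)) + ∑ j, xo j * Real.log (xo j))/2 - SS := by
            rw [Finset.sum_sub_distrib, hSSdef]
            congr 1
            rw [← Finset.sum_div, Finset.sum_add_distrib]
    have hquad : ∑ i, (∑ j, A i j * xh j)*(yh i)^2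
        ≤ ((∑ i, (∑ j, A i j * xk1 j)*(yk i)^2) + ∑ i, (∑ j, A i j * xo j)*(yo i)^2)/2
          + 4*SS := by
      have step1 : ∀ i : Fin (2*n), (∑ j, A i j * xh j)*(yh i)^2
          = ∑ j, A i j * (xh j * (yh i)^2) := by
        intro i; rw [Finset.sum_mul]; exact Finset.sum_congr rfl fun j _ => by ring
      have step2 : ∀ (i : Fin (2*n)) (j : Fin m), A i j * (xh j * (yh i)^2)
          ≤ A i j * ((xk1 j * (yk i)^2 + xo j * (yo i)^2)/2 + 2*Q j) := by
        intro i j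
        apply mul_le_mul_of_nonneg_left _ (hA0 i j)
        have hq := aux_quad (hxk1n j) (hxon j) (hyk i) (hyo i)
        have h2q : (xk1 j - xo j)^2/(2*(xk1 j + xo j)) = 2*Q j := by
          simp only [hQdef]
          rcases eq_or_lt_of_le (by linarith [hxk1n j, hxon j] : (0:ℝ) ≤ xk1 j + xo j) with h | h
          · rw [← h]; simp
          · field_simp; ring
        rw [h2q] at hq
        simp only [hxhdef, hyhdef]
        linarith
      have e3 : ∀ i : Fin (2*n), ∑ j, A i j * ((xk1 j * (yk i)^2 + xo j * (yo i)^2)/2 + 2*Q j)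
          = ((∑ j, A i j * xk1 j)*(yk i)^2 + (∑ j, A i j * xo j)*(yo i)^2)/2
            + 2*(∑ j, A i j * Q j) := by
        intro i
        rw [Finset.mul_sum, Finset.sum_mul, Finset.sum_mul, ← Finset.sum_add_distrib,
          Finset.sum_div, ← Finset.sum_add_distrib]
        exact Finset.sum_congr rfl fun j _ => by ring
      have e4 : ∑ i : Fin (2*n), ∑ j, A i j * Q j = 2*SS := by
        rw [Finset.sum_comm, hSSdef, Finset.mul_sum]
        exact Finset.sum_congr rfl fun j _ => by rw [← Finset.sum_mul, hAcol j]
      calc ∑ i, (∑ j, A i j * xh j)*(yh i)^2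
          = ∑ i, ∑ j, A i j * (xh j * (yh i)^2) := Finset.sum_congr rfl fun i _ => step1 i
        _ ≤ ∑ i, ∑ j, A i j * ((xk1 j * (yk i)^2 + xo j * (yo i)^2)/2 + 2*Q j) :=
            Finset.sum_le_sum fun i _ => Finset.sum_le_sum fun j _ => step2 i j
        _ = ∑ i, (((∑ j, A i j * xk1 j)*(yk i)^2 + (∑ j, A i j * xo j)*(yo i)^2)/2
            + 2*(∑ j, A i j * Q j)) := Finset.sum_congr rfl fun i _ => e3 i
        _ = ((∑ i, (∑ j, A i j * xk1 j)*(yk i)^2) + ∑ i, (∑ j, A i j * xo j)*(yo i)^2)/2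
            + 4*SS := by
            rw [Finset.sum_add_distrib, ← Finset.mul_sum, e4]
            rw [← Finset.sum_div, Finset.sum_add_distrib]
            ring
    rw [fexp xh yh, fexp xk1 yk, fexp xo yo, hlin1, hlin2]
    have h20 := mul_le_mul_of_nonneg_left hent (by linarith : (0:ℝ) ≤ 20*M)
    have h2 := mul_le_mul_of_nonneg_left hquad (by linarith : (0:ℝ) ≤ 2*M)
    nlinarith [h20, h2]
  -- H3 : progress bound
  have hD : f xk2 yk1 ≤ f xh yk1 := hxk2min xh hxhn hxhs
  have hC : ∀ i : Fin (2*n), η i * (yk1 i - yh i)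
      + 2*M*((∑ j, A i j * xh j)*((yk1 i)^2 - (yh i)^2))
      ≤ M*(∑ j, A i j * xk1 j)*(yh i - yk1 i)^2
        - 2*M*(((∑ j, A i j * xk1 j) + (∑ j, A i j * xo j))/2)*(yh i - yk1 i)^2
        - 2*M*((∑ j, A i j * xo j) - (∑ j, A i j * xk1 j))*(yk1 i)*(yh i - yk1 i) := by
    intro i
    have h1 := oneD i (yh i) (hyhb i)
    rw [hbc i]
    nlinarith [h1]
  have hCb : f xh yk1 - f xh yh ≤ ∑ i, (M*(∑ j, A i j * xk1 j)*(yh i - yk1 i)^2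
      - 2*M*(((∑ j, A i j * xk1 j) + (∑ j, A i j * xo j))/2)*(yh i - yk1 i)^2
      - 2*M*((∑ j, A i j * xo j) - (∑ j, A i j * xk1 j))*(yk1 i)*(yh i - yk1 i)) := by
    rw [ydiff xh yk1 yh]
    exact Finset.sum_le_sum fun i _ => hC i
  have hT2 : f xk1 yk1 - f xk1 yh
      ≤ ∑ i, (-(M*(∑ j, A i j * xk1 j)*(yh i - yk1 i)^2)) := by
    rw [ydiff xk1 yk1 yh]
    refine Finset.sum_le_sum fun i _ => ?_
    have h1 := oneD i (yh i) (hyhb i)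
    nlinarith [h1]
  have hX : (f xk1 yh - f xh yh) - (f xk1 yk1 - f xh yk1)
      = ∑ i, (-(M*((∑ j, A i j * xo j) - (∑ j, A i j * xk1 j))
          *(2*(yk1 i)*(yh i - yk1 i) + (yh i - yk1 i)^2))) := by
    rw [xdiff2 xk1 xh yh yk1, Finset.mul_sum]
    refine Finset.sum_congr rfl fun i _ => ?_
    rw [hbc i]
    ring
  have hcross : ∀ i : Fin (2*n),
      (M*(∑ j, A i j * xk1 j)*(yh i - yk1 i)^2
        - 2*M*(((∑ j, A i j * xk1 j) + (∑ j, A i j * xo j))/2)*(yh i - yk1 i)^2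
        - 2*M*((∑ j, A i j * xo j) - (∑ j, A i j * xk1 j))*(yk1 i)*(yh i - yk1 i))
      + (-(M*(∑ j, A i j * xk1 j)*(yh i - yk1 i)^2))
      + (-(M*((∑ j, A i j * xo j) - (∑ j, A i j * xk1 j))
          *(2*(yk1 i)*(yh i - yk1 i) + (yh i - yk1 i)^2)))
      ≤ ∑ j, A i j * (16*M*Q j) := by
    intro i
    have hyhi := abs_le.1 (hyhb i)
    have hyk1i := abs_le.1 (hyk1 i)
    have hE2 : |yh i - yk1 i| ≤ 2 := by
      rw [abs_le]; constructor <;> [linarith [hyhi.1, hyk1i.2]; linarith [hyhi.2, hyk1i.1]]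
    have hK : |4*(yk1 i)*(yh i - yk1 i) + (yh i - yk1 i)^2| ≤ 4*|yh i - yk1 i| := by
      rw [show 4*(yk1 i)*(yh i - yk1 i) + (yh i - yk1 i)^2
        = (yh i - yk1 i)*(3*(yk1 i) + yh i) from by ring, abs_mul]
      have h3 : |3*(yk1 i) + yh i| ≤ 4 := by
        rw [abs_le]; constructor <;> [linarith [hyhi.1, hyk1i.1]; linarith [hyhi.2, hyk1i.2]]
      calc |yh i - yk1 i| * |3*(yk1 i) + yh i| ≤ |yh i - yk1 i| * 4 :=
            mul_le_mul_of_nonneg_left h3 (abs_nonneg _)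
        _ = 4*|yh i - yk1 i| := by ring
    have scalar : ∀ j, -((xo j - xk1 j)*(4*(yk1 i)*(yh i - yk1 i) + (yh i - yk1 i)^2))
        ≤ 2*(xh j)*(yh i - yk1 i)^2 + 16*Q j := by
      intro j
      have hw := aux_amgm (hxk1n j) (hxon j) hE2
      have h8 : (xo j - xk1 j)^2/((xk1 j + xo j)/2) = 8*Q j := by
        simp only [hQdef]
        rcases eq_or_lt_of_le (by linarith [hxk1n j, hxon j] : (0:ℝ) ≤ xk1 j + xo j) with h | h
        · have h1 : xk1 j = 0 := by linarith [hxk1n j, hxon j]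
          have h2 : xo j = 0 := by linarith [hxk1n j, hxon j]
          simp [h1, h2]
        · field_simp; ring
      rw [h8] at hw
      have hub : -((xo j - xk1 j)*(4*(yk1 i)*(yh i - yk1 i) + (yh i - yk1 i)^2))
          ≤ 4 * |xo j - xk1 j| * |yh i - yk1 i| := by
        calc -((xo j - xk1 j)*(4*(yk1 i)*(yh i - yk1 i) + (yh i - yk1 i)^2))
            ≤ |(xo j - xk1 j)*(4*(yk1 i)*(yh i - yk1 i) + (yh i - yk1 i)^2)| := neg_le_abs _
          _ = |xo j - xk1 j| * |4*(yk1 i)*(yh i - yk1 i) + (yh i - yk1 i)^2| := abs_mul _ _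
          _ ≤ |xo j - xk1 j| * (4*|yh i - yk1 i|) :=
              mul_le_mul_of_nonneg_left hK (abs_nonneg _)
          _ = 4 * |xo j - xk1 j| * |yh i - yk1 i| := by ring
      simp only [hxhdef]
      linarith [hub, hw]
    have hexp : -(M*((∑ j, A i j * xo j) - (∑ j, A i j * xk1 j))
        *(4*(yk1 i)*(yh i - yk1 i) + (yh i - yk1 i)^2))
        = ∑ j, A i j * (M*(-((xo j - xk1 j)
            *(4*(yk1 i)*(yh i - yk1 i) + (yh i - yk1 i)^2)))) := by
      rw [hdiffc i, Finset.mul_sum, Finset.sum_mul, ← Finset.sum_neg_distrib]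
      exact Finset.sum_congr rfl fun j _ => by ring
    have hstep : ∑ j, A i j * (M*(-((xo j - xk1 j)
        *(4*(yk1 i)*(yh i - yk1 i) + (yh i - yk1 i)^2))))
        ≤ ∑ j, A i j * (M*(2*(xh j)*(yh i - yk1 i)^2 + 16*Q j)) :=
      Finset.sum_le_sum fun j _ => mul_le_mul_of_nonneg_left
        (mul_le_mul_of_nonneg_left (scalar j) hM.le) (hA0 i j)
    have hsplit : ∑ j, A i j * (M*(2*(xh j)*(yh i - yk1 i)^2 + 16*Q j))
        = 2*M*(yh i - yk1 i)^2*(∑ j, A i j * xh j) + ∑ j, A i j*(16*M*Q j) := by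
      rw [Finset.mul_sum, ← Finset.sum_add_distrib]
      exact Finset.sum_congr rfl fun j _ => by ring
    have hfin : 2*M*(yh i - yk1 i)^2*(∑ j, A i j * xh j)
        = M*((∑ j, A i j * xk1 j) + (∑ j, A i j * xo j))*(yh i - yk1 i)^2 := by
      rw [hbc i]; ring
    calc (M*(∑ j, A i j * xk1 j)*(yh i - yk1 i)^2
        - 2*M*(((∑ j, A i j * xk1 j) + (∑ j, A i j * xo j))/2)*(yh i - yk1 i)^2
        - 2*M*((∑ j, A i j * xo j) - (∑ j, A i j * xk1 j))*(yk1 i)*(yh i - yk1 i))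
      + (-(M*(∑ j, A i j * xk1 j)*(yh i - yk1 i)^2))
      + (-(M*((∑ j, A i j * xo j) - (∑ j, A i j * xk1 j))
          *(2*(yk1 i)*(yh i - yk1 i) + (yh i - yk1 i)^2)))
        = -(M*((∑ j, A i j * xk1 j) + (∑ j, A i j * xo j))*(yh i - yk1 i)^2)
          + (-(M*((∑ j, A i j * xo j) - (∑ j, A i j * xk1 j))
            *(4*(yk1 i)*(yh i - yk1 i) + (yh i - yk1 i)^2))) := by ring
      _ = -(M*((∑ j, A i j * xk1 j) + (∑ j, A i j * xo j))*(yh i - yk1 i)^2)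
          + ∑ j, A i j * (M*(-((xo j - xk1 j)
              *(4*(yk1 i)*(yh i - yk1 i) + (yh i - yk1 i)^2)))) := by rw [hexp]
      _ ≤ -(M*((∑ j, A i j * xk1 j) + (∑ j, A i j * xo j))*(yh i - yk1 i)^2)
          + ∑ j, A i j * (M*(2*(xh j)*(yh i - yk1 i)^2 + 16*Q j)) := by linarith [hstep]
      _ = ∑ j, A i j*(16*M*Q j) := by rw [hsplit, hfin]; ring
  have hsum16 : ∑ i : Fin (2*n), ∑ j, A i j*(16*M*Q j) = 32*M*SS := by
    rw [Finset.sum_comm, hSSdef, Finset.mul_sum]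
    refine Finset.sum_congr rfl fun j _ => ?_
    rw [← Finset.sum_mul, hAcol j]
    ring
  have H3 : f xk1 yk - f xh yh ≤ (f xk1 yk - f xk1 yk1) + (f xk1 yk1 - f xk2 yk1) + 16*M*SS := by
    have hterms : (∑ i, (M*(∑ j, A i j * xk1 j)*(yh i - yk1 i)^2
        - 2*M*(((∑ j, A i j * xk1 j) + (∑ j, A i j * xo j))/2)*(yh i - yk1 i)^2
        - 2*M*((∑ j, A i j * xo j) - (∑ j, A i j * xk1 j))*(yk1 i)*(yh i - yk1 i)))
        + (∑ i, (-(M*(∑ j, A i j * xk1 j)*(yh i - yk1 i)^2)))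
        + (∑ i, (-(M*((∑ j, A i j * xo j) - (∑ j, A i j * xk1 j))
            *(2*(yk1 i)*(yh i - yk1 i) + (yh i - yk1 i)^2))))
        ≤ 32*M*SS := by
      rw [← Finset.sum_add_distrib, ← Finset.sum_add_distrib, ← hsum16]
      exact Finset.sum_le_sum fun i _ => hcross i
    linarith [hCb, hT2, hX, hD, hterms]
  -- conclude
  have H5 : f xo yo ≤ f xh yh := hopt xh yh hxhn hxhs hyhb
  have hG0 : 0 ≤ f xk1 yk - f xo yo := by
    have := hopt xk1 yk hxk1n hxk1s hyk; linarith
  have hP1 : 0 ≤ f xk1 yk - f xk1 yk1 := by have := hyk1min yk hyk; linarith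
  have hP2 : 0 ≤ f xk1 yk1 - f xk2 yk1 := by have := hxk2min xk1 hxk1n hxk1s; linarith
  have hSSG : 24*M*SS ≤ f xk1 yk - f xo yo := by linarith
  nlinarith [hM, hSS0]
end
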